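/- arXiv:2302.09703 — 7 statements merged into one kernel-verified Lean document; each statement's English description precedes it below -/
import Mathlib

section
/- Let A be a finite nonempty set, q : A → ℝ, and β > 0. Then max_{a∈A} q_a − (Σ_{a∈A} q_a·exp(β q_a)) / (Σ_{a∈A} exp(β q_a)) ≤ (log|A|)/β, and this quantity is nonnegative. -/
/-- Let `A` be a finite nonempty set, `q : A → ℝ`, and `β > 0`. Then
`max_a q_a − (Σ_a q_a·exp(β q_a)) / (Σ_a exp(β q_a)) ≤ log|A|/β`,
and this quantity is nonnegative. -/
theorem max_sub_softmax_avg_le {A : Type*} [Fintype A] [Nonempty A]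
    (q : A → ℝ) (β : ℝ) (hβ : 0 < β) :
    Finset.univ.sup' Finset.univ_nonempty q -
        (∑ a : A, q a * Real.exp (β * q a)) / (∑ a : A, Real.exp (β * q a)) ≤
      Real.log (Fintype.card A) / β ∧
    0 ≤ Finset.univ.sup' Finset.univ_nonempty q -
        (∑ a : A, q a * Real.exp (β * q a)) / (∑ a : A, Real.exp (β * q a)) := by
  set M := Finset.univ.sup' Finset.univ_nonempty q with hMdef
  set Z := ∑ a : A, Real.exp (β * q a) with hZdef
  have hZpos : 0 < Z := Finset.sum_pos (fun a _ => Real.exp_pos _) Finset.univ_nonempty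
  set avg := (∑ a : A, q a * Real.exp (β * q a)) / Z with havgdef
  have hqM : ∀ a : A, q a ≤ M := fun a => Finset.le_sup' q (Finset.mem_univ a)
  -- avg ≤ M
  have havg_le : avg ≤ M := by
    rw [havgdef, div_le_iff₀ hZpos]
    calc ∑ a : A, q a * Real.exp (β * q a)
        ≤ ∑ a : A, M * Real.exp (β * q a) :=
          Finset.sum_le_sum fun a _ =>
            mul_le_mul_of_nonneg_right (hqM a) (Real.exp_nonneg _)
      _ = M * Z := by rw [hZdef, Finset.mul_sum]
  -- weights
  set w : A → ℝ := fun a => Real.exp (β * q a) / Z with hwdef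
  have hwpos : ∀ a, 0 < w a := fun a => div_pos (Real.exp_pos _) hZpos
  have hwsum : ∑ a : A, w a = 1 := by
    rw [hwdef, ← Finset.sum_div, ← hZdef, div_self hZpos.ne']
  set z : A → ℝ := fun a => (w a)⁻¹ with hzdef
  have hzpos : ∀ a, 0 < z a := fun a => inv_pos.mpr (hwpos a)
  have hamgm : ∏ a : A, z a ^ w a ≤ ∑ a : A, w a * z a :=
    Real.geom_mean_le_arith_mean_weighted _ w z (fun a _ => (hwpos a).le) hwsum
      (fun a _ => (hzpos a).le)
  have hsum_wz : ∑ a : A, w a * z a = (Fintype.card A : ℝ) := by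
    have : ∀ a : A, w a * z a = 1 := fun a => by
      rw [hzdef]; exact mul_inv_cancel₀ (hwpos a).ne'
    simp [this, Finset.card_univ]
  have hprodpos : 0 < ∏ a : A, z a ^ w a :=
    Finset.prod_pos fun a _ => Real.rpow_pos_of_pos (hzpos a) _
  have hH : ∑ a : A, w a * Real.log (z a) ≤ Real.log (Fintype.card A) := by
    have := Real.log_le_log hprodpos (hamgm.trans_eq hsum_wz)
    rwa [Real.log_prod (fun a _ => (Real.rpow_pos_of_pos (hzpos a) _).ne'),
      Finset.sum_congr rfl (fun a _ => Real.log_rpow (hzpos a) (w a))] at this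
  -- compute Σ w log z = log Z - β * avg
  have hlogz : ∀ a : A, Real.log (z a) = Real.log Z - β * q a := by
    intro a
    rw [hzdef, hwdef]
    simp only []
    rw [inv_div, Real.log_div hZpos.ne' (Real.exp_pos _).ne', Real.log_exp]
  have hkey : Real.log Z - β * avg ≤ Real.log (Fintype.card A) := by
    have : ∑ a : A, w a * Real.log (z a) = Real.log Z - β * avg := by
      rw [Finset.sum_congr rfl (fun a _ => by rw [hlogz a])]
      rw [show (∑ a : A, w a * (Real.log Z - β * q a)) =
          (∑ a : A, w a) * Real.log Z - β * ∑ a : A, w a * q a by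
        simp only [mul_sub, Finset.sum_sub_distrib, ← Finset.sum_mul, Finset.mul_sum]
        congr 1
        exact Finset.sum_congr rfl fun a _ => by ring]
      rw [hwsum, one_mul]
      congr 1
      congr 1
      rw [havgdef, Finset.sum_div]
      exact Finset.sum_congr rfl fun a _ => by rw [hwdef]; ring
    rwa [this] at hH
  -- β M ≤ log Z
  have hβM : β * M ≤ Real.log Z := by
    obtain ⟨a0, _, ha0⟩ := Finset.exists_mem_eq_sup' Finset.univ_nonempty q
    have : Real.exp (β * M) ≤ Z := by
      rw [hMdef, ha0, hZdef]
      exact Finset.single_le_sum (f := fun a => Real.exp (β * q a)) (fun a _ => (Real.exp_pos _).le) (Finset.mem_univ a0)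
    calc β * M = Real.log (Real.exp (β * M)) := (Real.log_exp _).symm
      _ ≤ Real.log Z := Real.log_le_log (Real.exp_pos _) this
  have hmain : M - avg ≤ Real.log (Fintype.card A) / β := by
    rw [le_div_iff₀ hβ]
    nlinarith [hkey, hβM]
  exact ⟨hmain, by linarith⟩
end

section
/- Let A be a finite nonempty set, q, q̄ : A → ℝ, and β > 0. Then Σ_{a∈A} | exp(β q_a)/Σ_{a'∈A} exp(β q_{a'}) − exp(β q̄_a)/Σ_{a'∈A} exp(β q̄_{a'}) | ≤ 2β · max_{a∈A} |q_a − q̄_a|. That is, the total-variation distance between the two softmax distributions is bounded by 2β times the sup-norm distance of q and q̄. -/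
/-- The total-variation distance between two softmax distributions is bounded by
`2β` times the sup-norm distance of the score vectors. -/
theorem softmax_total_variation_le {A : Type*} [Fintype A] [Nonempty A]
    (q qbar : A → ℝ) (β : ℝ) (hβ : 0 < β) :
    ∑ a : A,
        |Real.exp (β * q a) / (∑ a' : A, Real.exp (β * q a')) -
          Real.exp (β * qbar a) / (∑ a' : A, Real.exp (β * qbar a'))| ≤
      2 * β * Finset.univ.sup' Finset.univ_nonempty (fun a => |q a - qbar a|) := by
  classical
  set ε := Finset.univ.sup' Finset.univ_nonempty (fun a => |q a - qbar a|) with hεdef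
  set v : A → ℝ := fun a => qbar a - q a with hv
  have hvε : ∀ a, |v a| ≤ ε := by
    intro a
    have h := Finset.le_sup' (fun a => |q a - qbar a|) (Finset.mem_univ a)
    calc |v a| = |q a - qbar a| := by simp only [hv]; exact abs_sub_comm _ _
      _ ≤ ε := h
  have hε0 : 0 ≤ ε := le_trans (abs_nonneg _) (hvε (Classical.arbitrary A))
  set g : ℝ → A → ℝ := fun t a => Real.exp (β * (q a + t * v a)) with hg
  set S : ℝ → ℝ := fun t => ∑ a, g t a with hS
  have hgpos : ∀ t a, 0 < g t a := fun t a => Real.exp_pos _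
  have hSpos : ∀ t, 0 < S t := fun t =>
    Finset.sum_pos (fun a _ => hgpos t a) Finset.univ_nonempty
  have hgd : ∀ t a, HasDerivAt (fun t => g t a) (β * v a * g t a) t := by
    intro t a
    have h0 : HasDerivAt (fun t : ℝ => q a + t * v a) (v a) t := by
      simpa using ((hasDerivAt_id t).mul_const (v a)).const_add (q a)
    have h1 : HasDerivAt (fun t : ℝ => β * (q a + t * v a)) (β * v a) t := by
      simpa [mul_comm] using h0.const_mul β
    simpa [hg, mul_comm, mul_left_comm] using h1.exp
  have hSd : ∀ t, HasDerivAt S (∑ a, β * v a * g t a) t := fun t =>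
    HasDerivAt.fun_sum (fun a _ => hgd t a)
  set F' : ℝ → A → ℝ := fun t a =>
    (β * v a * g t a * S t - g t a * ∑ b, β * v b * g t b) / (S t) ^ 2 with hF'
  have hfd : ∀ t a, HasDerivAt (fun t => g t a / S t) (F' t a) t := fun t a =>
    (hgd t a).div (hSd t) (hSpos t).ne'
  have hgc : ∀ a, Continuous (fun t => g t a) := by
    intro a
    exact Real.continuous_exp.comp (by continuity)
  have hSc : Continuous S := by
    have : Continuous fun t => ∑ a, g t a := continuous_finset_sum _ (fun a _ => hgc a)
    simpa [hS] using this
  have hF'c : ∀ a, Continuous (fun t => F' t a) := by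
    intro a
    apply Continuous.div
    · exact ((continuous_const.mul (hgc a)).mul hSc).sub
        ((hgc a).mul (continuous_finset_sum _ (fun b _ => continuous_const.mul (hgc b))))
    · exact hSc.pow 2
    · exact fun t => pow_ne_zero 2 (hSpos t).ne'
  -- pointwise bound on the ℓ¹ norm of the derivative
  have hkey : ∀ t a, |F' t a| ≤ 2 * β * ε * (g t a / S t) := by
    intro t a
    have hT : |∑ b, β * v b * g t b| ≤ β * ε * S t := by
      calc |∑ b, β * v b * g t b| ≤ ∑ b, |β * v b * g t b| :=
            Finset.abs_sum_le_sum_abs _ _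
        _ ≤ ∑ b, β * ε * g t b := by
            apply Finset.sum_le_sum
            intro b _
            rw [abs_mul, abs_mul, abs_of_pos hβ, abs_of_pos (hgpos t b)]
            exact mul_le_mul_of_nonneg_right
              (mul_le_mul_of_nonneg_left (hvε b) hβ.le) (hgpos t b).le
        _ = β * ε * S t := by rw [← Finset.mul_sum]
    have hnum : |β * v a * g t a * S t - g t a * ∑ b, β * v b * g t b|
        ≤ g t a * (2 * β * ε * S t) := by
      have h1 : β * v a * g t a * S t - g t a * ∑ b, β * v b * g t b
          = g t a * (β * v a * S t - ∑ b, β * v b * g t b) := by ring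
      rw [h1, abs_mul, abs_of_pos (hgpos t a)]
      refine mul_le_mul_of_nonneg_left ?_ (hgpos t a).le
      have htri : |β * v a * S t - ∑ b, β * v b * g t b|
          ≤ |β * v a * S t| + |∑ b, β * v b * g t b| :=
        abs_sub _ _
      have h2 : |β * v a * S t| ≤ β * ε * S t := by
        rw [abs_mul, abs_mul, abs_of_pos hβ, abs_of_pos (hSpos t)]
        exact mul_le_mul_of_nonneg_right
          (mul_le_mul_of_nonneg_left (hvε a) hβ.le) (hSpos t).le
      calc |β * v a * S t - ∑ b, β * v b * g t b|
          ≤ |β * v a * S t| + |∑ b, β * v b * g t b| := htri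
        _ ≤ β * ε * S t + β * ε * S t := add_le_add h2 hT
        _ = 2 * β * ε * S t := by ring
    have habs : |F' t a| = |β * v a * g t a * S t - g t a * ∑ b, β * v b * g t b| / (S t) ^ 2 := by
      rw [hF', abs_div, abs_pow, abs_of_pos (hSpos t)]
    rw [habs]
    have hq : g t a * (2 * β * ε * S t) / (S t) ^ 2 = 2 * β * ε * (g t a / S t) := by
      field_simp
    calc |β * v a * g t a * S t - g t a * ∑ b, β * v b * g t b| / (S t) ^ 2
        ≤ g t a * (2 * β * ε * S t) / (S t) ^ 2 :=
          (div_le_div_iff_of_pos_right (pow_pos (hSpos t) 2)).mpr hnum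
      _ = 2 * β * ε * (g t a / S t) := hq
  have hbound : ∀ t, ∑ a, |F' t a| ≤ 2 * β * ε := by
    intro t
    calc ∑ a, |F' t a| ≤ ∑ a, 2 * β * ε * (g t a / S t) :=
          Finset.sum_le_sum (fun a _ => hkey t a)
      _ = 2 * β * ε * ∑ a, g t a / S t := by rw [Finset.mul_sum]
      _ = 2 * β * ε := by
          rw [← Finset.sum_div, div_self (hSpos t).ne', mul_one]
  -- fundamental theorem of calculus
  have hFTC : ∀ a, (∫ t in (0:ℝ)..1, F' t a) = g 1 a / S 1 - g 0 a / S 0 := fun a =>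
    intervalIntegral.integral_eq_sub_of_hasDerivAt (fun t _ => hfd t a)
      ((hF'c a).intervalIntegrable 0 1)
  have hq0 : ∀ a, g 0 a = Real.exp (β * q a) := by intro a; simp [hg]
  have hq1 : ∀ a, g 1 a = Real.exp (β * qbar a) := by
    intro a; simp only [hg, hv]; ring_nf
  have hS0 : S 0 = ∑ a', Real.exp (β * q a') := by
    rw [hS]; exact Finset.sum_congr rfl (fun a _ => hq0 a)
  have hS1 : S 1 = ∑ a', Real.exp (β * qbar a') := by
    rw [hS]; exact Finset.sum_congr rfl (fun a _ => hq1 a)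
  calc ∑ a : A, |Real.exp (β * q a) / (∑ a' : A, Real.exp (β * q a')) -
          Real.exp (β * qbar a) / (∑ a' : A, Real.exp (β * qbar a'))|
      = ∑ a : A, |∫ t in (0:ℝ)..1, F' t a| := by
        refine Finset.sum_congr rfl (fun a _ => ?_)
        rw [hFTC a, hq0, hq1, hS0, hS1, abs_sub_comm]
    _ ≤ ∑ a : A, ∫ t in (0:ℝ)..1, |F' t a| := by
        refine Finset.sum_le_sum (fun a _ => ?_)
        simpa [Real.norm_eq_abs] using
          intervalIntegral.norm_integral_le_integral_norm (f := fun t => F' t a)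
            (μ := MeasureTheory.volume) (a := (0:ℝ)) (b := 1) (by norm_num)
    _ = ∫ t in (0:ℝ)..1, ∑ a, |F' t a| :=
        (intervalIntegral.integral_finset_sum
          (fun a _ => ((hF'c a).abs.intervalIntegrable 0 1))).symm
    _ ≤ ∫ t in (0:ℝ)..1, 2 * β * ε := by
        refine intervalIntegral.integral_mono_on (by norm_num)
          ((continuous_finset_sum _ (fun a _ => (hF'c a).abs)).intervalIntegrable 0 1)
          (intervalIntegrable_const) (fun t _ => hbound t)
    _ = 2 * β * ε := by simp
end

section
/- The following two statements are equivalent: (1) there exist a vector θ ∈ ℝ^d and finite signed Borel measures μ_1,…,μ_d on S such that for all (s,a) ∈ S×A, r(s,a) = ⟨φ(s,a), θ⟩ and P(s,a)(E) = Σ_{i=1}^d φ_i(s,a)·μ_i(E) for every Borel set E ⊆ S; (2) there exists a constant C > 0 such that for every bounded continuous f : S → ℝ there exists ω_f ∈ ℝ^d with r(s,a) + ∫_S f(s') dP(s,a)(s') = ⟨φ(s,a), ω_f⟩ for all (s,a) ∈ S×A and ‖ω_f‖ ≤ C·(‖f‖_{C(S)} + 1). -/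
open MeasureTheory
open scoped RealInnerProductSpace NNReal ENNReal

section Aux

variable {S : Type*} [MetricSpace S] [CompactSpace S] [MeasurableSpace S] [BorelSpace S]

/-- Continuous functions on a compact metric space are integrable w.r.t. finite measures. -/
theorem LinMDP.cmInt (μ : Measure S) [IsFiniteMeasure μ] (f : C(S, ℝ)) : Integrable f μ :=
  ⟨f.continuous.aestronglyMeasurable,
    HasFiniteIntegral.of_bounded (C := ‖f‖)
      (Filter.Eventually.of_forall fun x => f.norm_coe_le_norm x)⟩

theorem LinMDP.rearr {ι : Type*} [Fintype ι] (c y : ι → ℝ) (x : ℝ) :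
    x + ∑ i, max (-(c i)) 0 * y i = ∑ i, max (c i) 0 * y i ↔ x = ∑ i, c i * y i := by
  have hkey : ∑ i, max (c i) 0 * y i - ∑ i, max (-(c i)) 0 * y i = ∑ i, c i * y i := by
    rw [← Finset.sum_sub_distrib]
    refine Finset.sum_congr rfl fun i _ => ?_
    have hmax : max (c i) 0 - max (-(c i)) 0 = c i := by
      rcases le_total (c i) 0 with h | h
      · simp [max_eq_right h, max_eq_left (neg_nonneg.mpr h)]
      · simp [max_eq_left h, max_eq_right (neg_nonpos.mpr h)]
    rw [← sub_mul, hmax]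
  constructor <;> intro h <;> linarith

theorem LinMDP.M_apply {ι : Type*} [Fintype ι] (c : ι → ℝ) (P : ι → Measure S)
    [∀ i, IsFiniteMeasure (P i)] (E : Set S) :
    ((∑ i, (c i).toNNReal • P i) E).toReal = ∑ i, max (c i) 0 * (P i E).toReal := by
  rw [Measure.finset_sum_apply, ENNReal.toReal_sum]
  · refine Finset.sum_congr rfl fun i _ => ?_
    rw [Measure.smul_apply, ENNReal.smul_def, smul_eq_mul, ENNReal.toReal_mul]
    simp [Real.coe_toNNReal']
  · intro i _
    rw [Measure.smul_apply, ENNReal.smul_def, smul_eq_mul]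
    exact ENNReal.mul_ne_top (by simp) (measure_ne_top _ _)

theorem LinMDP.M_integral {ι : Type*} [Fintype ι] (c : ι → ℝ) (P : ι → Measure S)
    [∀ i, IsFiniteMeasure (P i)] (f : C(S, ℝ)) :
    ∫ x, f x ∂(∑ i, (c i).toNNReal • P i) = ∑ i, max (c i) 0 * ∫ x, f x ∂(P i) := by
  rw [integral_finset_sum_measure (fun i _ => LinMDP.cmInt _ f)]
  refine Finset.sum_congr rfl fun i _ => ?_
  rw [integral_smul_nnreal_measure]
  simp [NNReal.smul_def, Real.coe_toNNReal']

/-- A finite measure agrees with a (formal) signed combination of finite measures on all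
measurable sets iff the corresponding integrals of continuous functions agree. -/
theorem LinMDP.key {ι : Type*} [Fintype ι] (ν : Measure S) [IsFiniteMeasure ν] (c : ι → ℝ)
    (P : ι → Measure S) [∀ i, IsFiniteMeasure (P i)] :
    (∀ E : Set S, MeasurableSet E → (ν E).toReal = ∑ i, c i * (P i E).toReal) ↔
      ∀ f : C(S, ℝ), ∫ x, f x ∂ν = ∑ i, c i * ∫ x, f x ∂(P i) := by
  set μ₁ := ν + ∑ i, (-(c i)).toNNReal • P i with hμ₁
  set μ₂ := ∑ i, (c i).toNNReal • P i with hμ₂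
  have h₁E : ∀ E : Set S, (μ₁ E).toReal
      = (ν E).toReal + ∑ i, max (-(c i)) 0 * (P i E).toReal := by
    intro E
    rw [hμ₁, Measure.add_apply, ENNReal.toReal_add (measure_ne_top _ _) (measure_ne_top _ _),
      LinMDP.M_apply]
  have h₂E : ∀ E : Set S, (μ₂ E).toReal = ∑ i, max (c i) 0 * (P i E).toReal := fun E =>
    LinMDP.M_apply c P E
  have h₁f : ∀ f : C(S, ℝ), ∫ x, f x ∂μ₁
      = (∫ x, f x ∂ν) + ∑ i, max (-(c i)) 0 * ∫ x, f x ∂(P i) := by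
    intro f
    rw [hμ₁, integral_add_measure (LinMDP.cmInt _ f) (LinMDP.cmInt _ f), LinMDP.M_integral]
  have h₂f : ∀ f : C(S, ℝ), ∫ x, f x ∂μ₂ = ∑ i, max (c i) 0 * ∫ x, f x ∂(P i) := fun f =>
    LinMDP.M_integral c P f
  have hsets : (∀ E : Set S, MeasurableSet E → (ν E).toReal = ∑ i, c i * (P i E).toReal)
      ↔ μ₁ = μ₂ := by
    constructor
    · intro h
      ext E hE
      rw [← ENNReal.toReal_eq_toReal_iff' (measure_ne_top _ _) (measure_ne_top _ _), h₁E, h₂E]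
      exact (LinMDP.rearr c _ _).mpr (h E hE)
    · intro h E hE
      refine (LinMDP.rearr c (fun i => (P i E).toReal) ((ν E).toReal)).mp ?_
      rw [← h₁E, ← h₂E, h]
  have hints : (∀ f : C(S, ℝ), ∫ x, f x ∂ν = ∑ i, c i * ∫ x, f x ∂(P i)) ↔ μ₁ = μ₂ := by
    constructor
    · intro h
      apply ext_of_forall_lintegral_eq_of_IsFiniteMeasure
      intro g
      have hg : Continuous fun x => ((g x : ℝ)) := NNReal.continuous_coe.comp g.continuous
      have hkey : ∫ x, ((⟨_, hg⟩ : C(S, ℝ)) x) ∂μ₁ = ∫ x, ((⟨_, hg⟩ : C(S, ℝ)) x) ∂μ₂ := by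
        rw [h₁f, h₂f]
        exact (LinMDP.rearr c (fun i => ∫ x, ((⟨_, hg⟩ : C(S, ℝ)) x) ∂(P i)) _).mpr (h _)
      rw [lintegral_coe_eq_integral _ (LinMDP.cmInt μ₁ ⟨_, hg⟩),
        lintegral_coe_eq_integral _ (LinMDP.cmInt μ₂ ⟨_, hg⟩)]
      simp only [ContinuousMap.coe_mk] at hkey ⊢
      rw [hkey]
    · intro h f
      refine (LinMDP.rearr c (fun i => ∫ x, f x ∂(P i)) (∫ x, f x ∂ν)).mp ?_
      rw [← h₁f, ← h₂f, h]
  rw [hsets, hints]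

end Aux

/-- A transition kernel `P` and reward `r` on a compact state-action space admit a
linear-MDP representation `r = ⟨φ, θ⟩`, `P = φᵀμ` (with `d` finite signed measures
`μ_1,…,μ_d`) if and only if the Bellman operator `f ↦ r + ∫ f dP` maps every bounded
continuous function to a linear function `⟨φ, ω_f⟩` with `‖ω_f‖ ≤ C(‖f‖_{C(S)} + 1)`. -/
theorem linear_mdp_iff_bellman_linear
    {S A : Type*} [MetricSpace S] [CompactSpace S] [MeasurableSpace S] [BorelSpace S]
    [MetricSpace A] [CompactSpace A]
    (d : ℕ) (φ : S → A → EuclideanSpace ℝ (Fin d))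
    (r : S → A → ℝ) (P : S → A → Measure S)
    [∀ s a, IsProbabilityMeasure (P s a)] :
    (∃ (θ : EuclideanSpace ℝ (Fin d)) (μ : Fin d → SignedMeasure S),
        (∀ s a, r s a = ⟪φ s a, θ⟫) ∧
          ∀ s a, ∀ E : Set S, MeasurableSet E →
            (P s a E).toReal = ∑ i, φ s a i * μ i E) ↔
      ∃ C : ℝ, 0 < C ∧ ∀ f : C(S, ℝ), ∃ ω : EuclideanSpace ℝ (Fin d),
        (∀ s a, r s a + ∫ s', f s' ∂(P s a) = ⟪φ s a, ω⟫) ∧ ‖ω‖ ≤ C * (‖f‖ + 1) := by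
  classical
  constructor
  · rintro ⟨θ, μ, hrθ, hPμ⟩
    set p : Fin d → Measure S := fun i => (μ i).toJordanDecomposition.posPart with hp
    set n : Fin d → Measure S := fun i => (μ i).toJordanDecomposition.negPart with hn
    have hμapp : ∀ i (E : Set S), MeasurableSet E →
        μ i E = (p i E).toReal - (n i E).toReal := by
      intro i E hE
      conv_lhs => rw [← (μ i).toSignedMeasure_toJordanDecomposition]
      rw [MeasureTheory.JordanDecomposition.toSignedMeasure, MeasureTheory.VectorMeasure.sub_apply,
        Measure.toSignedMeasure_apply_measurable hE, Measure.toSignedMeasure_apply_measurable hE]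
      rfl
    -- total masses
    set m : Fin d → ℝ := fun i => (p i Set.univ).toReal + (n i Set.univ).toReal with hm
    have hm0 : 0 ≤ ∑ i, m i :=
      Finset.sum_nonneg fun i _ => add_nonneg ENNReal.toReal_nonneg ENNReal.toReal_nonneg
    refine ⟨‖θ‖ + (∑ i, m i) + 1, by positivity, fun f => ?_⟩
    -- the integral identity, pointwise in (s, a)
    have hint : ∀ s a, ∫ x, f x ∂(P s a)
        = ∑ i, φ s a i * ((∫ x, f x ∂(p i)) - ∫ x, f x ∂(n i)) := by
      intro s a
      set c : Fin d × Bool → ℝ := fun x => cond x.2 (φ s a x.1) (-(φ s a x.1)) with hc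
      set Q : Fin d × Bool → Measure S := fun x => cond x.2 (p x.1) (n x.1) with hQ
      haveI hQfin : ∀ x : Fin d × Bool, IsFiniteMeasure (Q x) := by
        rintro ⟨i, (_ | _)⟩ <;> simp only [hQ, Bool.cond_true, Bool.cond_false] <;> infer_instance
      have hsets : ∀ E : Set S, MeasurableSet E →
          ((P s a) E).toReal = ∑ x : Fin d × Bool, c x * ((Q x) E).toReal := by
        intro E hE
        rw [hPμ s a E hE, Fintype.sum_prod_type]
        refine Finset.sum_congr rfl fun i _ => ?_
        rw [Fintype.sum_bool]
        simp only [hc, hQ, Bool.cond_true, Bool.cond_false]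
        rw [hμapp i E hE]; ring
      have hints := (LinMDP.key (P s a) c Q).mp hsets f
      rw [hints, Fintype.sum_prod_type]
      refine Finset.sum_congr rfl fun i _ => ?_
      rw [Fintype.sum_bool]
      simp only [hc, hQ, Bool.cond_true, Bool.cond_false]
      ring_nf
    set g : EuclideanSpace ℝ (Fin d) :=
      WithLp.toLp 2 (fun i => (∫ x, f x ∂(p i)) - ∫ x, f x ∂(n i) : ∀ _ : Fin d, ℝ) with hg
    refine ⟨θ + g, fun s a => ?_, ?_⟩
    · rw [inner_add_right, ← hrθ s a, hint s a]
      have hgi : ⟪φ s a, g⟫ = ∑ i, φ s a i * ((∫ x, f x ∂(p i)) - ∫ x, f x ∂(n i)) := by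
        rw [PiLp.inner_apply]
        simp [RCLike.inner_apply, hg]
        exact Finset.sum_congr rfl fun i _ => mul_comm _ _
      rw [hgi]
    · -- norm bound
      have hgbd : ∀ i, |g i| ≤ ‖f‖ * m i := by
        intro i
        have h1 : ‖∫ x, f x ∂(p i)‖ ≤ ‖f‖ * ((p i) Set.univ).toReal :=
          norm_integral_le_of_norm_le_const
            (Filter.Eventually.of_forall fun x => f.norm_coe_le_norm x)
        have h2 : ‖∫ x, f x ∂(n i)‖ ≤ ‖f‖ * ((n i) Set.univ).toReal :=
          norm_integral_le_of_norm_le_const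
            (Filter.Eventually.of_forall fun x => f.norm_coe_le_norm x)
        rw [Real.norm_eq_abs] at h1 h2
        have := abs_sub (∫ x, f x ∂(p i)) (∫ x, f x ∂(n i))
        simp only [hm, mul_add]
        calc |g i| ≤ |∫ x, f x ∂(p i)| + |∫ x, f x ∂(n i)| := abs_sub _ _
          _ ≤ ‖f‖ * ((p i) Set.univ).toReal + ‖f‖ * ((n i) Set.univ).toReal := add_le_add h1 h2
      have hgnorm : ‖g‖ ≤ ∑ i, |g i| := by
        have hdecomp : g = ∑ i, g i • EuclideanSpace.single i (1 : ℝ) := by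
          have h := (EuclideanSpace.basisFun (Fin d) ℝ).sum_repr g
          simp only [EuclideanSpace.basisFun_repr, EuclideanSpace.basisFun_apply] at h
          exact h.symm
        calc ‖g‖ = ‖∑ i, g i • EuclideanSpace.single i (1 : ℝ)‖ := by rw [← hdecomp]
          _ ≤ ∑ i, ‖g i • EuclideanSpace.single i (1 : ℝ)‖ := norm_sum_le _ _
          _ = ∑ i, |g i| := by
              refine Finset.sum_congr rfl fun i _ => ?_
              rw [norm_smul, EuclideanSpace.norm_single]
              simp
      have hsum : ∑ i, |g i| ≤ (∑ i, m i) * ‖f‖ := by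
        rw [Finset.sum_mul]
        refine Finset.sum_le_sum fun i _ => ?_
        rw [mul_comm (m i) ‖f‖]
        exact hgbd i
      have hθg : ‖θ + g‖ ≤ ‖θ‖ + ‖g‖ := norm_add_le _ _
      have hf0 : (0:ℝ) ≤ ‖f‖ := norm_nonneg f
      have hθ0 : (0:ℝ) ≤ ‖θ‖ := norm_nonneg θ
      nlinarith [hgnorm, hsum, hθg]
  · rintro ⟨C, -, h⟩
    obtain ⟨ω₀, hω₀, -⟩ := h 0
    have hrθ : ∀ s a, r s a = ⟪φ s a, ω₀⟫ := by
      intro s a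
      have := hω₀ s a
      simpa using this
    -- linear algebra setup
    set R : Set (EuclideanSpace ℝ (Fin d)) := Set.range (fun q : S × A => φ q.1 q.2) with hR
    obtain ⟨b, hbR, hspan, hli⟩ := exists_linearIndependent ℝ R
    haveI : Fintype b := hli.setFinite.fintype
    set V := Submodule.span ℝ R with hV
    have hVeq : Submodule.span ℝ (Set.range ((↑) : b → EuclideanSpace ℝ (Fin d))) = V := by
      rw [Subtype.range_coe]; exact hspan
    set eqv := LinearEquiv.ofEq _ _ hVeq.symm with heqv
    set T : EuclideanSpace ℝ (Fin d) →ₗ[ℝ] (b →₀ ℝ) :=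
      (hli.repr.comp eqv.toLinearMap).comp V.orthogonalProjectionOnto.toLinearMap with hTdef
    have hT : ∀ x (hx : x ∈ V), ∑ v : b, T x v • (v : EuclideanSpace ℝ (Fin d)) = x := by
      intro x hx
      have hproj : V.orthogonalProjectionOnto x = ⟨x, hx⟩ :=
        Submodule.orthogonalProjectionOnto_mem_subspace_eq_self (⟨x, hx⟩ : V)
      have h2 := hli.linearCombination_repr (eqv ⟨x, hx⟩)
      rw [Finsupp.linearCombination_apply, Finsupp.sum_fintype] at h2
      · have hcoe : ((eqv ⟨x, hx⟩ : Submodule.span ℝ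
            (Set.range ((↑) : b → EuclideanSpace ℝ (Fin d)))) :
            EuclideanSpace ℝ (Fin d)) = x := rfl
        have hTx : T x = hli.repr (eqv ⟨x, hx⟩) := by
          rw [hTdef]; simp [hproj]
        rw [hTx]
        calc ∑ v : b, (hli.repr (eqv ⟨x, hx⟩)) v • (v : EuclideanSpace ℝ (Fin d))
            = ((eqv ⟨x, hx⟩ : Submodule.span ℝ
                (Set.range ((↑) : b → EuclideanSpace ℝ (Fin d)))) :
                EuclideanSpace ℝ (Fin d)) := by rw [← h2]
          _ = x := hcoe
      · exact fun v => zero_smul ℝ _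
    have hT1 : ∀ (x : EuclideanSpace ℝ (Fin d)) (v : b),
        T x v = ∑ i, x i * T (EuclideanSpace.single i 1) v := by
      intro x v
      have hx : x = ∑ i, x i • EuclideanSpace.single i (1:ℝ) := by
        have h' := (EuclideanSpace.basisFun (Fin d) ℝ).sum_repr x
        simp only [EuclideanSpace.basisFun_repr, EuclideanSpace.basisFun_apply] at h'
        exact h'.symm
      conv_lhs => rw [hx]
      rw [map_sum, Finsupp.finset_sum_apply]
      refine Finset.sum_congr rfl fun i _ => ?_
      rw [_root_.map_smul, Finsupp.smul_apply, smul_eq_mul]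
    -- choose representing state-action pairs for basis vectors
    have hσex : ∀ v : b, ∃ q : S × A, φ q.1 q.2 = (v : EuclideanSpace ℝ (Fin d)) :=
      fun v => hbR v.2
    choose σ hσ using hσex
    haveI hPfin : ∀ v : b, IsFiniteMeasure (P (σ v).1 (σ v).2) := fun v => inferInstance
    set w : b → Fin d → ℝ := fun v i => T (EuclideanSpace.single i 1) v with hw
    refine ⟨ω₀, fun i => ∑ v : b, w v i • (P (σ v).1 (σ v).2).toSignedMeasure, hrθ, ?_⟩
    intro s a E hE
    have hx : φ s a ∈ V := Submodule.subset_span ⟨(s, a), rfl⟩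
    set c : b → ℝ := fun v => T (φ s a) v with hcdef
    have hdec : ∑ v : b, c v • (v : EuclideanSpace ℝ (Fin d)) = φ s a := hT (φ s a) hx
    have hbell : ∀ f : C(S, ℝ), r s a + ∫ x', f x' ∂(P s a)
        = ∑ v : b, c v * (r (σ v).1 (σ v).2 + ∫ x', f x' ∂(P (σ v).1 (σ v).2)) := by
      intro f
      obtain ⟨ω, hω, -⟩ := h f
      rw [hω s a, ← hdec, sum_inner]
      refine Finset.sum_congr rfl fun v _ => ?_
      rw [real_inner_smul_left, ← hσ v, ← hω (σ v).1 (σ v).2]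
    have hr0 : r s a = ∑ v : b, c v * r (σ v).1 (σ v).2 := by simpa using hbell 0
    have hint : ∀ f : C(S, ℝ), ∫ x', f x' ∂(P s a)
        = ∑ v : b, c v * ∫ x', f x' ∂(P (σ v).1 (σ v).2) := by
      intro f
      have h1 := hbell f
      simp only [mul_add, Finset.sum_add_distrib] at h1
      rw [← hr0] at h1
      linarith
    have hsets := (LinMDP.key (P s a) c (fun v => P (σ v).1 (σ v).2)).mpr hint E hE
    rw [hsets]
    have hvm : ∀ i, (∑ v : b, w v i • (P (σ v).1 (σ v).2).toSignedMeasure) E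
        = ∑ v : b, w v i * ((P (σ v).1 (σ v).2) E).toReal := by
      intro i
      induction (Finset.univ : Finset b) using Finset.induction with
      | empty => simp
      | insert v t hvt ih =>
          rw [Finset.sum_insert hvt, Finset.sum_insert hvt,
            MeasureTheory.VectorMeasure.add_apply, ih, MeasureTheory.VectorMeasure.smul_apply,
            Measure.toSignedMeasure_apply_measurable hE, smul_eq_mul]
          rfl
    calc ∑ v : b, c v * ((P (σ v).1 (σ v).2) E).toReal
        = ∑ v : b, (∑ i, φ s a i * w v i) * ((P (σ v).1 (σ v).2) E).toReal := by
          refine Finset.sum_congr rfl fun v _ => ?_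
          rw [hcdef]
          simp only [hw]
          rw [hT1 (φ s a) v]
      _ = ∑ i, φ s a i *
            (∑ v : b, w v i • (P (σ v).1 (σ v).2).toSignedMeasure) E := by
          simp only [hvm, Finset.mul_sum, Finset.sum_mul]
          rw [Finset.sum_comm]
          refine Finset.sum_congr rfl fun i _ => ?_
          refine Finset.sum_congr rfl fun v _ => ?_
          ring
end

section
/- Let x_1,…,x_n ∈ X and let G be a map from the closed unit ball {f ∈ H : ‖f‖ ≤ 1} to C(X) such that Gf = Gf' whenever ⟨f, Φ(x_i)⟩ = ⟨f', Φ(x_i)⟩ for all i = 1,…,n. Then sup_{‖f‖ ≤ 1} sup_{x ∈ X} | ⟨f, Φ(x)⟩ − (Gf)(x) | ≥ ( Σ_{i=n+1}^∞ λ_i )^{1/2}. In particular, the worst-case L^∞ error of any such estimator based on n point evaluations is lower bounded by the square root of the tail sum of the kernel eigenvalues. -/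
open MeasureTheory
open scoped RealInnerProductSpace ENNReal

open Finset Filter Topology

lemma expand_norm_sub_sq_aux {E : Type*} [NormedAddCommGroup E] [InnerProductSpace ℝ E]
    {ι : Type*} [DecidableEq ι] (s : Finset ι) (v : ι → E)
    (hv : ∀ i ∈ s, ∀ k ∈ s, ⟪v i, v k⟫ = if i = k then 1 else 0) (x : E) :
    ‖x - ∑ i ∈ s, ⟪v i, x⟫ • v i‖ ^ 2 = ‖x‖ ^ 2 - ∑ i ∈ s, ⟪v i, x⟫ ^ 2 := by
  have h1 : ⟪x, ∑ i ∈ s, ⟪v i, x⟫ • v i⟫ = ∑ i ∈ s, ⟪v i, x⟫ ^ 2 := by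
    rw [inner_sum]
    refine Finset.sum_congr rfl fun i hi => ?_
    rw [real_inner_smul_right, real_inner_comm]; ring
  have h2 : ∀ i ∈ s, ⟪v i, ∑ k ∈ s, ⟪v k, x⟫ • v k⟫ = ⟪v i, x⟫ := by
    intro i hi
    rw [inner_sum]
    have heq : ∀ k ∈ s, ⟪v i, ⟪v k, x⟫ • v k⟫ = if k = i then ⟪v k, x⟫ else 0 := by
      intro k hk
      rw [real_inner_smul_right, hv i hi k hk]
      rcases eq_or_ne i k with h | h
      · subst h; simp
      · simp [h, h.symm]
    rw [Finset.sum_congr rfl heq, Finset.sum_ite_eq' s i (fun k => ⟪v k, x⟫), if_pos hi]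
  have h3 : ⟪∑ i ∈ s, ⟪v i, x⟫ • v i, ∑ k ∈ s, ⟪v k, x⟫ • v k⟫ = ∑ i ∈ s, ⟪v i, x⟫ ^ 2 := by
    rw [sum_inner]
    refine Finset.sum_congr rfl fun i hi => ?_
    rw [real_inner_smul_left, h2 i hi]; ring
  have h4 : ‖∑ i ∈ s, ⟪v i, x⟫ • v i‖ ^ 2 = ∑ i ∈ s, ⟪v i, x⟫ ^ 2 := by
    rw [← real_inner_self_eq_norm_sq, h3]
  rw [norm_sub_sq_real, h1, h4]; ring

lemma bessel_finset {E : Type*} [NormedAddCommGroup E] [InnerProductSpace ℝ E]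
    {ι : Type*} [DecidableEq ι] (s : Finset ι) (v : ι → E)
    (hv : ∀ i ∈ s, ∀ k ∈ s, ⟪v i, v k⟫ = if i = k then 1 else 0) (x : E) :
    ∑ i ∈ s, ⟪v i, x⟫ ^ 2 ≤ ‖x‖ ^ 2 := by
  have := expand_norm_sub_sq_aux s v hv x
  nlinarith [sq_nonneg ‖x - ∑ i ∈ s, ⟪v i, x⟫ • v i‖]

lemma rearr_lemma (lam : ℕ → ℝ) (hmono : Antitone lam) (h0 : ∀ i, 0 ≤ lam i) (β : ℕ → ℝ)
    (hβ0 : ∀ i, 0 ≤ β i) (hβ1 : ∀ i, β i ≤ 1) (m N : ℕ)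
    (hsum : ∑ i ∈ range m, β i ≤ N) :
    ∑ i ∈ range m, lam i * β i ≤ ∑ i ∈ range N, lam i := by
  rcases le_or_gt m N with h | h
  · calc ∑ i ∈ range m, lam i * β i ≤ ∑ i ∈ range m, lam i := by
          refine Finset.sum_le_sum fun i _ => ?_
          nlinarith [h0 i, hβ0 i, hβ1 i]
      _ ≤ ∑ i ∈ range N, lam i := by
          refine Finset.sum_le_sum_of_subset_of_nonneg (Finset.range_subset_range.2 h)
            fun i _ _ => h0 i
  · have key : ∀ i ∈ range m, lam i * β i ≤ (if i < N then lam i - lam N else 0) + lam N * β i := by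
      intro i _
      by_cases hi : i < N
      · have : lam N ≤ lam i := hmono hi.le
        simp only [hi, if_pos]
        nlinarith [hβ1 i, hβ0 i]
      · have : lam i ≤ lam N := hmono (Nat.le_of_not_lt hi)
        simp only [hi, if_neg, not_false_iff]
        nlinarith [hβ0 i]
    have hfilter : (range m).filter (fun i => i < N) = range N := by
      ext i
      simp only [Finset.mem_filter, Finset.mem_range]
      exact ⟨fun ⟨_, h2⟩ => h2, fun h2 => ⟨h2.trans h, h2⟩⟩
    calc ∑ i ∈ range m, lam i * β i
        ≤ ∑ i ∈ range m, ((if i < N then lam i - lam N else 0) + lam N * β i) :=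
          Finset.sum_le_sum key
      _ = (∑ i ∈ range m, if i < N then lam i - lam N else 0) + lam N * ∑ i ∈ range m, β i := by
          rw [Finset.sum_add_distrib, Finset.mul_sum]
      _ ≤ (∑ i ∈ range N, (lam i - lam N)) + lam N * N := by
          rw [← Finset.sum_filter, hfilter]
          exact add_le_add le_rfl (mul_le_mul_of_nonneg_left hsum (h0 N))
      _ = ∑ i ∈ range N, lam i := by
          rw [Finset.sum_sub_distrib, Finset.sum_const, Finset.card_range, nsmul_eq_mul]
          ring

lemma inner_residual_zero {E : Type*} [NormedAddCommGroup E] [InnerProductSpace ℝ E]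
    {ι : Type*} [DecidableEq ι] (s : Finset ι) (v : ι → E)
    (hv : ∀ i ∈ s, ∀ k ∈ s, ⟪v i, v k⟫ = if i = k then 1 else 0) (x : E)
    {i : ι} (hi : i ∈ s) :
    ⟪v i, x - ∑ k ∈ s, ⟪v k, x⟫ • v k⟫ = 0 := by
  rw [inner_sub_right, inner_sum]
  have heq : ∀ k ∈ s, ⟪v i, ⟪v k, x⟫ • v k⟫ = if k = i then ⟪v k, x⟫ else 0 := by
    intro k hk
    rw [real_inner_smul_right, hv i hi k hk]
    rcases eq_or_ne i k with h | h
    · subst h; simp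
    · simp [h, h.symm]
  rw [Finset.sum_congr rfl heq, Finset.sum_ite_eq' s i (fun k => ⟪v k, x⟫), if_pos hi, sub_self]



/-- Any estimator `G` mapping the unit ball of `H` to `C(X)` that depends only on the
`n` point evaluations `⟪f, Φ(x_i)⟫` has worst-case `L^∞` error at least
`(Σ_{i=n+1}^∞ λ_i)^{1/2}`. -/
theorem worst_case_Linfty_error_ge_sqrt_tail
    {X : Type*} [MetricSpace X] [CompactSpace X] [MeasurableSpace X] [BorelSpace X]
    (ρ : Measure X) [IsProbabilityMeasure ρ]
    {H : Type*} [NormedAddCommGroup H] [InnerProductSpace ℝ H] [CompleteSpace H]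
    (Φ : X → H) (hΦc : Continuous Φ) (hΦ : ∀ x, ‖Φ x‖ ≤ 1)
    (lam : ℕ → ℝ) (hlam_anti : Antitone lam) (hlam_nonneg : ∀ i, 0 ≤ lam i)
    (ψ : ℕ → X → ℝ) (hψc : ∀ i, Continuous (ψ i))
    (horth : ∀ i j, ∫ x, ψ i x * ψ j x ∂ρ = if i = j then 1 else 0)
    (heig : ∀ i x, ∫ y, ⟪Φ x, Φ y⟫ * ψ i y ∂ρ = lam i * ψ i x)
    (hmercer : ∀ x y, HasSum (fun i => lam i * ψ i x * ψ i y) ⟪Φ x, Φ y⟫)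
    (n : ℕ) (pts : Fin n → X) (G : H → C(X, ℝ))
    (hG : ∀ f f' : H, ‖f‖ ≤ 1 → ‖f'‖ ≤ 1 →
      (∀ i, ⟪f, Φ (pts i)⟫ = ⟪f', Φ (pts i)⟫) → G f = G f') :
    ENNReal.ofReal (Real.sqrt (∑' i : ℕ, lam (n + i))) ≤
      ⨆ (f : H) (_ : ‖f‖ ≤ 1), ⨆ x : X, (‖⟪f, Φ x⟫ - G f x‖₊ : ℝ≥0∞) := by
  classical
  set T : ℝ := ∑' i : ℕ, lam (n + i) with hT_def
  rcases le_or_gt T 0 with hT | hT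
  · rw [Real.sqrt_eq_zero'.2 hT]; simp
  -- X is nonempty
  haveI hXne : Nonempty X := by
    by_contra h
    rw [not_nonempty_iff] at h
    have h1 : ρ Set.univ = 1 := measure_univ
    rw [Set.univ_eq_empty_iff.2 h] at h1
    simp at h1
  -- integrability of continuous functions
  have hint : ∀ f : X → ℝ, Continuous f → Integrable f ρ := fun f hf =>
    hf.integrable_of_hasCompactSupport (HasCompactSupport.of_compactSpace f)
  have hintH : ∀ f : X → H, Continuous f → Integrable f ρ := fun f hf =>
    hf.integrable_of_hasCompactSupport (HasCompactSupport.of_compactSpace f)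
  have hΦ1 : ∀ x, ‖Φ x‖ ^ 2 ≤ 1 := fun x => by
    nlinarith [hΦ x, norm_nonneg (Φ x)]
  -- feature vectors
  set w : ℕ → H := fun i => ∫ y, ψ i y • Φ y ∂ρ with hw_def
  have hwint : ∀ i, Integrable (fun y => ψ i y • Φ y) ρ := fun i =>
    hintH _ ((hψc i).smul hΦc)
  have hw_apply : ∀ j, w j = ∫ y, ψ j y • Φ y ∂ρ := fun j => by rw [hw_def]
  have hwΦ : ∀ i x, ⟪Φ x, w i⟫ = lam i * ψ i x := by
    intro i x
    rw [hw_apply i, ← integral_inner (hwint i) (Φ x), ← heig i x]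
    refine integral_congr_ae (Eventually.of_forall fun y => ?_)
    simp only [real_inner_smul_right]
    ring
  have hww : ∀ i j, ⟪w i, w j⟫ = if i = j then lam i else 0 := by
    intro i j
    have h1 : ⟪w i, w j⟫ = ∫ y, ψ j y * ⟪Φ y, w i⟫ ∂ρ := by
      conv_lhs => rw [hw_apply j]
      rw [← integral_inner (hwint j) (w i)]
      refine integral_congr_ae (Eventually.of_forall fun y => ?_)
      simp only [real_inner_smul_right]
      rw [real_inner_comm]
    rw [h1]
    have h2 : ∀ y, ψ j y * ⟪Φ y, w i⟫ = lam i * (ψ i y * ψ j y) := fun y => by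
      rw [hwΦ i y]; ring
    simp_rw [h2]
    rw [integral_const_mul, horth i j]
    by_cases h : i = j <;> simp [h]
  -- partial sums
  set S : ℕ → X → H := fun m x => ∑ i ∈ Finset.range m, ψ i x • w i with hS_def
  set F : ℕ → X → ℝ := fun m x => ∑ i ∈ Finset.range m, lam i * ψ i x * ψ i x with hF_def
  have hwS : ∀ m x, ∀ i ∈ Finset.range m, ⟪w i, S m x⟫ = lam i * ψ i x := by
    intro m x i hi
    rw [hS_def]
    simp only [inner_sum, real_inner_smul_right]
    have heq : ∀ k ∈ Finset.range m, ψ k x * ⟪w i, w k⟫ = if i = k then lam i * ψ i x else 0 := by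
      intro k _
      rw [hww i k]
      rcases eq_or_ne i k with h | h
      · subst h; simp; ring
      · simp [h]
    rw [Finset.sum_congr rfl heq, Finset.sum_ite_eq (Finset.range m) i
      (fun k => lam i * ψ i x), if_pos hi]
  have hFS : ∀ m x, ‖Φ x - S m x‖ ^ 2 = ‖Φ x‖ ^ 2 - F m x := by
    intro m x
    have h1 : ⟪Φ x, S m x⟫ = F m x := by
      rw [hS_def, hF_def]
      simp only [inner_sum, real_inner_smul_right]
      refine Finset.sum_congr rfl fun i _ => ?_
      rw [hwΦ i x]; ring
    have h2 : ‖S m x‖ ^ 2 = F m x := by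
      rw [← real_inner_self_eq_norm_sq, hS_def, hF_def, sum_inner]
      refine Finset.sum_congr rfl fun i hi => ?_
      rw [real_inner_smul_left, hwS m x i hi]; ring
    rw [norm_sub_sq_real, h1, h2]; ring
  have hF_nonneg : ∀ m x, 0 ≤ F m x := by
    intro m x
    refine Finset.sum_nonneg fun i _ => ?_
    have := hlam_nonneg i
    nlinarith [sq_nonneg (ψ i x)]
  have hF_le : ∀ m x, F m x ≤ 1 := by
    intro m x
    have := hFS m x
    nlinarith [sq_nonneg ‖Φ x - S m x‖, hΦ1 x]
  have hFcont : ∀ m, Continuous (F m) := by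
    intro m
    exact continuous_finset_sum _ fun i _ => (continuous_const.mul (hψc i)).mul (hψc i)
  have hFint : ∀ m, ∫ x, F m x ∂ρ = ∑ i ∈ Finset.range m, lam i := by
    intro m
    rw [hF_def, integral_finset_sum _ fun i _ =>
      hint (fun x => lam i * ψ i x * ψ i x) ((continuous_const.mul (hψc i)).mul (hψc i))]
    refine Finset.sum_congr rfl fun i _ => ?_
    have : ∀ x, lam i * ψ i x * ψ i x = lam i * (ψ i x * ψ i x) := fun x => by ring
    simp_rw [this]
    rw [integral_const_mul, horth i i, if_pos rfl, mul_one]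
  have hnormsqcont : Continuous fun x => ‖Φ x‖ ^ 2 := (hΦc.norm.pow 2)
  have hsumlam : Summable lam := by
    refine summable_of_sum_range_le (c := 1) hlam_nonneg fun m => ?_
    rw [← hFint m]
    calc ∫ x, F m x ∂ρ ≤ ∫ _x, (1 : ℝ) ∂ρ :=
          integral_mono (hint _ (hFcont m)) (integrable_const 1) fun x => hF_le m x
      _ = 1 := by simp
  have hItotal : ∫ x, ‖Φ x‖ ^ 2 ∂ρ = ∑' i, lam i := by
    have hDCT : Tendsto (fun m => ∫ x, F m x ∂ρ) atTop (𝓝 (∫ x, ‖Φ x‖ ^ 2 ∂ρ)) := by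
      refine tendsto_integral_of_dominated_convergence (fun _ => (1 : ℝ))
        (fun m => (hFcont m).aestronglyMeasurable) (integrable_const 1)
        (fun m => Eventually.of_forall fun x => ?_)
        (Eventually.of_forall fun x => ?_)
      · rw [Real.norm_eq_abs, abs_of_nonneg (hF_nonneg m x)]
        exact hF_le m x
      · have := (hmercer x x).tendsto_sum_nat
        rwa [real_inner_self_eq_norm_sq] at this
    have h2 : Tendsto (fun m => ∫ x, F m x ∂ρ) atTop (𝓝 (∑' i, lam i)) := by
      simp_rw [hFint]
      exact hsumlam.hasSum.tendsto_sum_nat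
    exact tendsto_nhds_unique hDCT h2
  have hTdecomp : T = (∑' i, lam i) - ∑ i ∈ Finset.range n, lam i := by
    have h1 : T = ∑' i, lam (i + n) := by
      rw [hT_def]
      exact tsum_congr fun i => by rw [add_comm]
    have := Summable.sum_add_tsum_nat_add n hsumlam
    linarith [h1 ▸ this]
  -- the span of the point features
  set K : Submodule ℝ H := Submodule.span ℝ (Set.range fun i : Fin n => Φ (pts i)) with hK_def
  haveI : FiniteDimensional ℝ K := FiniteDimensional.span_of_finite ℝ (Set.finite_range _)
  set N := Module.finrank ℝ K with hN_def
  have hNn : N ≤ n := by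
    have h1 := finrank_span_le_card (R := ℝ) (Set.range fun i : Fin n => Φ (pts i))
    have h2 : (Set.range fun i : Fin n => Φ (pts i)).toFinset.card ≤ n := by
      rw [Set.toFinset_range]
      exact Finset.card_image_le.trans (by simp)
    rw [hN_def, hK_def]
    exact h1.trans h2
  set b := stdOrthonormalBasis ℝ K with hb_def
  set e : Fin N → H := fun j => (b j : H) with he_def
  have he : ∀ i j, ⟪e i, e j⟫ = if i = j then 1 else 0 := by
    intro i j
    have h1 := orthonormal_iff_ite.1 b.orthonormal i j
    rw [Submodule.coe_inner] at h1
    simpa [he_def] using h1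
  have heK : ∀ j, e j ∈ K := fun j => by rw [he_def]; exact SetLike.coe_mem (b j)
  have he_univ : ∀ i ∈ Finset.univ, ∀ k ∈ (Finset.univ : Finset (Fin N)),
      ⟪e i, e k⟫ = if i = k then 1 else 0 := fun i _ k _ => he i k
  set Q : X → H := fun x => ∑ j : Fin N, ⟪e j, Φ x⟫ • e j with hQ_def
  have hQK : ∀ x, Q x ∈ K := fun x =>
    Submodule.sum_mem _ fun j _ => Submodule.smul_mem _ _ (heK j)
  set r : X → H := fun x => Φ x - Q x with hr_def
  have hre : ∀ x j, ⟪e j, r x⟫ = 0 := fun x j =>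
    inner_residual_zero Finset.univ e he_univ (Φ x) (Finset.mem_univ j)
  have hrK : ∀ x, ∀ u ∈ K, ⟪u, r x⟫ = 0 := by
    intro x u hu
    have hrepr := b.sum_repr ⟨u, hu⟩
    have hu_eq : u = ∑ j : Fin N, (b.repr ⟨u, hu⟩ j) • e j := by
      have := congrArg (Subtype.val : K → H) hrepr
      simpa [he_def] using this.symm
    rw [hu_eq, sum_inner]
    refine Finset.sum_eq_zero fun j _ => ?_
    rw [real_inner_smul_left, hre x j, mul_zero]
  have hrnorm : ∀ x, ‖r x‖ ^ 2 = ‖Φ x‖ ^ 2 - ∑ j : Fin N, ⟪e j, Φ x⟫ ^ 2 := fun x =>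
    expand_norm_sub_sq_aux Finset.univ e he_univ (Φ x)
  have hrcont : Continuous r := by
    rw [hr_def, hQ_def]
    exact hΦc.sub (continuous_finset_sum _ fun j _ =>
      (continuous_const.inner hΦc).smul continuous_const)
  -- inner products of features with basis, via integrals
  have hgcont : ∀ j : Fin N, Continuous fun x => ⟪e j, Φ x⟫ := fun j => continuous_const.inner hΦc
  have hgψ : ∀ (j : Fin N) i, ∫ x, ⟪e j, Φ x⟫ * ψ i x ∂ρ = ⟪e j, w i⟫ := by
    intro j i
    rw [hw_apply i, ← integral_inner (hwint i) (e j)]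
    refine integral_congr_ae (Eventually.of_forall fun x => ?_)
    simp only [real_inner_smul_right]
    ring
  have hkey : ∀ (j : Fin N) (m : ℕ), ∫ x, ⟪e j, Φ x⟫ ^ 2 ∂ρ ≤
      (∑ i ∈ Finset.range m, ⟪e j, w i⟫ ^ 2) +
        ((∑' i, lam i) - ∑ i ∈ Finset.range m, lam i) := by
    intro j m
    set gg : X → ℝ := fun x => ⟪e j, Φ x⟫ with hgg_def
    set c : ℕ → ℝ := fun i => ⟪e j, w i⟫ with hc_def
    set p : X → ℝ := fun x => ∑ i ∈ Finset.range m, c i * ψ i x with hp_def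
    have hpcont : Continuous p := continuous_finset_sum _ fun i _ => continuous_const.mul (hψc i)
    have hggcont : Continuous gg := hgcont j
    have hgp_int : ∀ i : ℕ, ∫ x, gg x * ψ i x ∂ρ = c i := hgψ j
    have hptw : ∀ x, gg x - p x = ⟪e j, Φ x - S m x⟫ := by
      intro x
      rw [inner_sub_right]
      have h1 : ⟪e j, S m x⟫ = p x := by
        rw [hS_def, hp_def]
        simp only [inner_sum, real_inner_smul_right]
        exact Finset.sum_congr rfl fun i _ => by rw [hc_def]; ring
      rw [h1, hgg_def]
    have hptw2 : ∀ x, (gg x - p x) ^ 2 ≤ ‖Φ x‖ ^ 2 - F m x := by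
      intro x
      rw [hptw x, ← hFS m x]
      have h1 := real_inner_mul_inner_self_le (e j) (Φ x - S m x)
      have h2 : ⟪e j, e j⟫ = (1 : ℝ) := by rw [he j j, if_pos rfl]
      rw [h2, one_mul, real_inner_self_eq_norm_sq] at h1
      rw [sq]
      exact h1
    have hI1 : ∫ x, gg x * p x ∂ρ = ∑ i ∈ Finset.range m, c i ^ 2 := by
      have heq : ∀ x, gg x * p x = ∑ i ∈ Finset.range m, c i * (gg x * ψ i x) := by
        intro x
        rw [hp_def, Finset.mul_sum]
        exact Finset.sum_congr rfl fun i _ => by ring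
      rw [integral_congr_ae (Eventually.of_forall heq),
        integral_finset_sum _ fun i _ =>
          (hint (fun x => gg x * ψ i x) (hggcont.mul (hψc i))).const_mul (c i)]
      refine Finset.sum_congr rfl fun i _ => ?_
      rw [integral_const_mul, hgp_int i, sq]
    have hψp : ∀ i ∈ Finset.range m, ∫ x, ψ i x * p x ∂ρ = c i := by
      intro i hi
      have heq : ∀ x, ψ i x * p x = ∑ k ∈ Finset.range m, c k * (ψ i x * ψ k x) := by
        intro x
        rw [hp_def, Finset.mul_sum]
        exact Finset.sum_congr rfl fun k _ => by ring
      rw [integral_congr_ae (Eventually.of_forall heq),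
        integral_finset_sum _ fun k _ =>
          (hint (fun x => ψ i x * ψ k x) ((hψc i).mul (hψc k))).const_mul (c k)]
      have heq2 : ∀ k ∈ Finset.range m, ∫ x, c k * (ψ i x * ψ k x) ∂ρ
          = if i = k then c k else 0 := by
        intro k _
        rw [integral_const_mul, horth i k]
        rcases eq_or_ne i k with h | h
        · subst h; simp
        · simp [h]
      rw [Finset.sum_congr rfl heq2, Finset.sum_ite_eq (Finset.range m) i (fun k => c k),
        if_pos hi]
    have hI2 : ∫ x, p x * p x ∂ρ = ∑ i ∈ Finset.range m, c i ^ 2 := by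
      have heq : ∀ x, p x * p x = ∑ i ∈ Finset.range m, c i * (ψ i x * p x) := by
        intro x
        conv_lhs => rw [hp_def]
        rw [Finset.sum_mul]
        exact Finset.sum_congr rfl fun i _ => by ring
      rw [integral_congr_ae (Eventually.of_forall heq),
        integral_finset_sum _ fun i _ =>
          (hint (fun x => ψ i x * p x) ((hψc i).mul hpcont)).const_mul (c i)]
      refine Finset.sum_congr rfl fun i hi => ?_
      rw [integral_const_mul, hψp i hi, sq]
    have hI3 : ∫ x, (gg x - p x) ^ 2 ∂ρ
        = ∫ x, gg x ^ 2 ∂ρ - ∑ i ∈ Finset.range m, c i ^ 2 := by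
      have heq : ∀ x, (gg x - p x) ^ 2 = gg x ^ 2 - (2 * (gg x * p x) - p x * p x) := by
        intro x; ring
      have e1 : Integrable (fun x => gg x ^ 2) ρ := hint _ (hggcont.pow 2)
      have e2 : Integrable (fun x => 2 * (gg x * p x)) ρ :=
        (hint _ (hggcont.mul hpcont)).const_mul 2
      have e3 : Integrable (fun x => p x * p x) ρ := hint _ (hpcont.mul hpcont)
      have e23 : Integrable (fun x => 2 * (gg x * p x) - p x * p x) ρ := e2.sub e3
      rw [integral_congr_ae (Eventually.of_forall heq), integral_sub e1 e23,
        integral_sub e2 e3, integral_const_mul, hI1, hI2]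
      ring
    have hI4 : ∫ x, (gg x - p x) ^ 2 ∂ρ ≤ (∑' i, lam i) - ∑ i ∈ Finset.range m, lam i := by
      calc ∫ x, (gg x - p x) ^ 2 ∂ρ ≤ ∫ x, (‖Φ x‖ ^ 2 - F m x) ∂ρ :=
            integral_mono (hint _ ((hggcont.sub hpcont).pow 2))
              ((hint _ hnormsqcont).sub (hint _ (hFcont m))) fun x => hptw2 x
        _ = (∑' i, lam i) - ∑ i ∈ Finset.range m, lam i := by
            rw [integral_sub (hint _ hnormsqcont) (hint _ (hFcont m)), hItotal, hFint]
    have hgsq : ∫ x, gg x ^ 2 ∂ρ = ∫ x, ⟪e j, Φ x⟫ ^ 2 ∂ρ := rfl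
    linarith [hI3, hI4]
  -- total projected energy is at most the top-n eigenvalue sum
  have hA : ∑ j : Fin N, ∫ x, ⟪e j, Φ x⟫ ^ 2 ∂ρ ≤ ∑ i ∈ Finset.range n, lam i := by
    set Γ : ℕ → ℝ := fun i => ∑ j : Fin N, ⟪e j, w i⟫ ^ 2 with hΓ_def
    have hΓ_nonneg : ∀ i, 0 ≤ Γ i := fun i => Finset.sum_nonneg fun j _ => sq_nonneg _
    have hwnormsq : ∀ i, ⟪w i, w i⟫ = lam i := fun i => by rw [hww i i, if_pos rfl]
    have hGamma_le : ∀ i, Γ i ≤ lam i := by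
      intro i
      have h1 := bessel_finset Finset.univ e he_univ (w i)
      rw [← real_inner_self_eq_norm_sq, hwnormsq i] at h1
      have h2 : Γ i = ∑ j : Fin N, ⟪e j, w i⟫ ^ 2 := rfl
      rw [h2]
      exact h1
    have hwzero : ∀ i, lam i = 0 → w i = 0 := by
      intro i h
      have h1 : ⟪w i, w i⟫ = (0 : ℝ) := by rw [hwnormsq i, h]
      exact inner_self_eq_zero.1 h1
    set β : ℕ → ℝ := fun i => if lam i = 0 then 0 else Γ i / lam i with hβ_def
    have hβ0 : ∀ i, 0 ≤ β i := by
      intro i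
      rw [hβ_def]
      rcases eq_or_ne (lam i) 0 with h | h
      · simp [h]
      · simp only [h, if_neg, not_false_iff]
        exact div_nonneg (hΓ_nonneg i) (hlam_nonneg i)
    have hβ1 : ∀ i, β i ≤ 1 := by
      intro i
      rw [hβ_def]
      rcases eq_or_ne (lam i) 0 with h | h
      · simp [h]
      · simp only [h, if_neg, not_false_iff]
        exact (div_le_one (lt_of_le_of_ne (hlam_nonneg i) (Ne.symm h))).2 (hGamma_le i)
    have hlam_beta : ∀ i, lam i * β i = Γ i := by
      intro i
      rcases eq_or_ne (lam i) 0 with h | h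
      · rw [h, zero_mul, hΓ_def]
        symm
        refine Finset.sum_eq_zero fun j _ => ?_
        rw [hwzero i h, inner_zero_right]
        simp
      · rw [hβ_def]
        simp only [h, if_neg, not_false_iff]
        field_simp
    have hβsum : ∀ m : ℕ, ∑ i ∈ Finset.range m, β i ≤ (N : ℝ) := by
      intro m
      set s : Finset ℕ := (Finset.range m).filter (fun i => ¬ lam i = 0) with hs_def
      have hpos : ∀ i ∈ s, 0 < lam i := by
        intro i hi
        rw [hs_def, Finset.mem_filter] at hi
        exact lt_of_le_of_ne (hlam_nonneg i) (Ne.symm hi.2)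
      set v : ℕ → H := fun i => (Real.sqrt (lam i))⁻¹ • w i with hv_def
      have hvv : ∀ i ∈ s, ∀ k ∈ s, ⟪v i, v k⟫ = if i = k then 1 else 0 := by
        intro i hi k hk
        rw [hv_def]
        simp only [real_inner_smul_left, real_inner_smul_right, hww i k]
        rcases eq_or_ne i k with h | h
        · subst h
          rw [if_pos rfl, if_pos rfl]
          have h1 : Real.sqrt (lam i) * Real.sqrt (lam i) = lam i :=
            Real.mul_self_sqrt (hpos i hi).le
          have h2 : Real.sqrt (lam i) ≠ 0 := by
            rw [Real.sqrt_ne_zero' ]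
            exact hpos i hi
          field_simp
          rw [sq, h1]
        · simp [h]
      have hper : ∀ j : Fin N, ∑ i ∈ s, ⟪e j, w i⟫ ^ 2 / lam i ≤ 1 := by
        intro j
        have hb2 := bessel_finset s v hvv (e j)
        have hnorm_e : ‖e j‖ ^ 2 = 1 := by
          rw [← real_inner_self_eq_norm_sq, he j j, if_pos rfl]
        have hterm : ∀ i ∈ s, ⟪v i, e j⟫ ^ 2 = ⟪e j, w i⟫ ^ 2 / lam i := by
          intro i hi
          rw [hv_def]
          simp only [real_inner_smul_left]
          rw [mul_pow, inv_pow, Real.sq_sqrt (hpos i hi).le, real_inner_comm]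
          ring
        rw [← Finset.sum_congr rfl hterm]
        rw [hnorm_e] at hb2
        exact hb2
      have hsplit : ∑ i ∈ Finset.range m, β i = ∑ j : Fin N, ∑ i ∈ s, ⟪e j, w i⟫ ^ 2 / lam i := by
        have h1 : ∑ i ∈ Finset.range m, β i = ∑ i ∈ s, Γ i / lam i := by
          rw [hs_def, Finset.sum_filter]
          refine Finset.sum_congr rfl fun i _ => ?_
          simp only [hβ_def]
          by_cases h : lam i = 0 <;> simp [h]
        rw [h1]
        have h2 : ∀ i ∈ s, Γ i / lam i = ∑ j : Fin N, ⟪e j, w i⟫ ^ 2 / lam i := by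
          intro i _
          rw [hΓ_def, Finset.sum_div]
        rw [Finset.sum_congr rfl h2, Finset.sum_comm]
      rw [hsplit]
      calc ∑ j : Fin N, ∑ i ∈ s, ⟪e j, w i⟫ ^ 2 / lam i ≤ ∑ _j : Fin N, (1 : ℝ) :=
            Finset.sum_le_sum fun j _ => hper j
        _ = N := by simp
    -- main bound for each m, then limit
    have hmain : ∀ m : ℕ, ∑ j : Fin N, ∫ x, ⟪e j, Φ x⟫ ^ 2 ∂ρ ≤
        (∑ i ∈ Finset.range n, lam i) +
          (N : ℝ) * ((∑' i, lam i) - ∑ i ∈ Finset.range m, lam i) := by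
      intro m
      have h1 : ∑ j : Fin N, ∫ x, ⟪e j, Φ x⟫ ^ 2 ∂ρ ≤
          ∑ j : Fin N, ((∑ i ∈ Finset.range m, ⟪e j, w i⟫ ^ 2) +
            ((∑' i, lam i) - ∑ i ∈ Finset.range m, lam i)) :=
        Finset.sum_le_sum fun j _ => hkey j m
      have h2 : ∑ j : Fin N, ((∑ i ∈ Finset.range m, ⟪e j, w i⟫ ^ 2) +
          ((∑' i, lam i) - ∑ i ∈ Finset.range m, lam i))
          = (∑ i ∈ Finset.range m, Γ i) +
            (N : ℝ) * ((∑' i, lam i) - ∑ i ∈ Finset.range m, lam i) := by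
        rw [Finset.sum_add_distrib, Finset.sum_comm, Finset.sum_const, Finset.card_univ,
          Fintype.card_fin, nsmul_eq_mul]
      have h3 : ∑ i ∈ Finset.range m, Γ i ≤ ∑ i ∈ Finset.range N, lam i := by
        have := rearr_lemma lam hlam_anti hlam_nonneg β hβ0 hβ1 m N (hβsum m)
        calc ∑ i ∈ Finset.range m, Γ i = ∑ i ∈ Finset.range m, lam i * β i :=
              Finset.sum_congr rfl fun i _ => (hlam_beta i).symm
          _ ≤ ∑ i ∈ Finset.range N, lam i := this
      have h4 : ∑ i ∈ Finset.range N, lam i ≤ ∑ i ∈ Finset.range n, lam i :=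
        Finset.sum_le_sum_of_subset_of_nonneg (Finset.range_subset_range.2 hNn)
          fun i _ _ => hlam_nonneg i
      linarith [h1, h2 ▸ h1]
    have htail : Tendsto (fun m => (∑ i ∈ Finset.range n, lam i) +
        (N : ℝ) * ((∑' i, lam i) - ∑ i ∈ Finset.range m, lam i)) atTop
        (𝓝 (∑ i ∈ Finset.range n, lam i)) := by
      have h1 := hsumlam.hasSum.tendsto_sum_nat
      have h2 : Tendsto (fun m => (∑' i, lam i) - ∑ i ∈ Finset.range m, lam i) atTop
          (𝓝 0) := by
        have := tendsto_const_nhds (x := (∑' i, lam i)) (f := atTop (α := ℕ)) |>.sub h1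
        simpa using this
      have h3 := h2.const_mul (N : ℝ)
      rw [mul_zero] at h3
      have h4 := (tendsto_const_nhds (x := ∑ i ∈ Finset.range n, lam i)
        (f := atTop (α := ℕ))).add h3
      simpa using h4
    exact ge_of_tendsto htail (Eventually.of_forall hmain)
  -- the residual carries at least the tail energy on average
  have hIr : T ≤ ∫ x, ‖r x‖ ^ 2 ∂ρ := by
    have hsqcont : Continuous fun x => ∑ j : Fin N, ⟪e j, Φ x⟫ ^ 2 :=
      continuous_finset_sum _ fun j _ => (hgcont j).pow 2
    have h1 : ∫ x, ‖r x‖ ^ 2 ∂ρ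
        = ∫ x, ‖Φ x‖ ^ 2 ∂ρ - ∑ j : Fin N, ∫ x, ⟪e j, Φ x⟫ ^ 2 ∂ρ := by
      rw [integral_congr_ae (Eventually.of_forall hrnorm),
        integral_sub (hint _ hnormsqcont) (hint _ hsqcont),
        integral_finset_sum _ fun j _ => hint (fun x => ⟪e j, Φ x⟫ ^ 2) ((hgcont j).pow 2)]
    rw [h1, hItotal, hTdecomp]
    linarith [hA]
  -- pick a maximising point
  have hcont_rsq : Continuous fun x => ‖r x‖ ^ 2 := hrcont.norm.pow 2
  obtain ⟨x₀, -, hx₀⟩ := IsCompact.exists_isMaxOn (isCompact_univ (X := X))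
    Set.univ_nonempty hcont_rsq.continuousOn
  have hx₀' : ∀ y, ‖r y‖ ^ 2 ≤ ‖r x₀‖ ^ 2 := fun y => hx₀ (Set.mem_univ y)
  have hTx₀ : T ≤ ‖r x₀‖ ^ 2 := by
    refine hIr.trans ?_
    calc ∫ x, ‖r x‖ ^ 2 ∂ρ ≤ ∫ _x, ‖r x₀‖ ^ 2 ∂ρ :=
          integral_mono (hint _ hcont_rsq) (integrable_const _) hx₀'
      _ = ‖r x₀‖ ^ 2 := by simp
  have hrpos : 0 < ‖r x₀‖ := by
    rcases (norm_nonneg (r x₀)).lt_or_eq with h | h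
    · exact h
    · exfalso
      rw [← h] at hTx₀
      simp only [ne_eq, OfNat.ofNat_ne_zero, not_false_eq_true, zero_pow] at hTx₀
      linarith
  set f₀ : H := ‖r x₀‖⁻¹ • r x₀ with hf₀_def
  have hf₀norm : ‖f₀‖ = 1 := by
    rw [hf₀_def, norm_smul, Real.norm_eq_abs, abs_inv, abs_of_pos hrpos]
    exact inv_mul_cancel₀ (ne_of_gt hrpos)
  have hsqrtT : Real.sqrt T ≤ ‖r x₀‖ := by
    have h1 := Real.sqrt_le_sqrt hTx₀
    rwa [Real.sqrt_sq (norm_nonneg _)] at h1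
  have hf₀perp : ∀ i : Fin n, ⟪f₀, Φ (pts i)⟫ = 0 := by
    intro i
    have hmem : Φ (pts i) ∈ K := by
      rw [hK_def]
      exact Submodule.subset_span ⟨i, rfl⟩
    rw [hf₀_def, real_inner_smul_left, real_inner_comm, hrK x₀ _ hmem, mul_zero]
  have hf₀x₀ : ⟪f₀, Φ x₀⟫ = ‖r x₀‖ := by
    have h1 : ⟪r x₀, Φ x₀⟫ = ‖r x₀‖ ^ 2 := by
      have hdec : Φ x₀ = r x₀ + Q x₀ := by rw [hr_def]; simp
      conv_lhs => rw [hdec]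
      rw [inner_add_right, real_inner_self_eq_norm_sq, real_inner_comm,
        hrK x₀ _ (hQK x₀), add_zero]
    rw [hf₀_def, real_inner_smul_left, h1, sq, ← mul_assoc,
      inv_mul_cancel₀ (ne_of_gt hrpos), one_mul]
  have hGeq : G f₀ = G (-f₀) :=
    hG f₀ (-f₀) (le_of_eq hf₀norm) (by rw [norm_neg]; exact le_of_eq hf₀norm)
      fun i => by rw [hf₀perp i, inner_neg_left, hf₀perp i, neg_zero]
  have hfinal : ∃ f : H, ‖f‖ ≤ 1 ∧ Real.sqrt T ≤ |⟪f, Φ x₀⟫ - G f x₀| := by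
    rcases le_or_gt (G f₀ x₀) 0 with hgv | hgv
    · refine ⟨f₀, le_of_eq hf₀norm, ?_⟩
      rw [hf₀x₀, abs_of_nonneg (by linarith)]
      linarith
    · refine ⟨-f₀, by rw [norm_neg]; exact le_of_eq hf₀norm, ?_⟩
      rw [inner_neg_left, hf₀x₀, ← hGeq, abs_of_nonpos (by linarith)]
      linarith
  obtain ⟨f₁, hf₁, hval⟩ := hfinal
  calc ENNReal.ofReal (Real.sqrt T) ≤ (‖⟪f₁, Φ x₀⟫ - G f₁ x₀‖₊ : ℝ≥0∞) := by
        rw [← enorm_eq_nnnorm, Real.enorm_eq_ofReal_abs]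
        exact ENNReal.ofReal_le_ofReal hval
    _ ≤ ⨆ x : X, (‖⟪f₁, Φ x⟫ - G f₁ x‖₊ : ℝ≥0∞) :=
        le_iSup (fun x => (‖⟪f₁, Φ x⟫ - G f₁ x‖₊ : ℝ≥0∞)) x₀
    _ ≤ ⨆ (_ : ‖f₁‖ ≤ 1), ⨆ x : X, (‖⟪f₁, Φ x⟫ - G f₁ x‖₊ : ℝ≥0∞) :=
        le_iSup (fun _ => ⨆ x : X, (‖⟪f₁, Φ x⟫ - G f₁ x‖₊ : ℝ≥0∞)) hf₁
    _ ≤ ⨆ (f : H) (_ : ‖f‖ ≤ 1), ⨆ x : X, (‖⟪f, Φ x⟫ - G f x‖₊ : ℝ≥0∞) :=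
        le_iSup (fun f => ⨆ (_ : ‖f‖ ≤ 1), ⨆ x : X, (‖⟪f, Φ x⟫ - G f x‖₊ : ℝ≥0∞)) f₁
end

section
/- Let x_1,…,x_n ∈ X and let G be a map from the closed unit ball {f ∈ H : ‖f‖ ≤ 1} to C(X) such that Gf = Gf' whenever ⟨f, Φ(x_i)⟩ = ⟨f', Φ(x_i)⟩ for all i = 1,…,n. Assume additionally the upper-confidence-bound property: (Gf)(x) ≥ ⟨f, Φ(x)⟩ for every f with ‖f‖ ≤ 1 and every x ∈ X. Then sup_{‖f‖ ≤ 1} ∫_X [ (Gf)(x) − ⟨f, Φ(x)⟩ ] dρ(x) ≥ Σ_{i=n+1}^∞ λ_i. -/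
open MeasureTheory
open scoped RealInnerProductSpace ENNReal

private lemma summable_mul_of_sq {f g : ℕ → ℝ} (hf : Summable fun l => f l ^ 2)
    (hg : Summable fun l => g l ^ 2) : Summable fun l => f l * g l := by
  apply Summable.of_abs
  apply Summable.of_nonneg_of_le (fun l => abs_nonneg _) (fun l => ?_)
    ((hf.add hg).div_const 2)
  have h := two_mul_le_add_sq (|f l|) (|g l|)
  rw [abs_mul]
  simp only [sq_abs] at h
  nlinarith [abs_nonneg (f l), abs_nonneg (g l)]

private lemma tsum_cauchy_schwarz {f g : ℕ → ℝ} (hf : Summable fun l => f l ^ 2)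
    (hg : Summable fun l => g l ^ 2) :
    (∑' l, f l * g l) ^ 2 ≤ (∑' l, f l ^ 2) * (∑' l, g l ^ 2) := by
  have hfg := summable_mul_of_sq hf hg
  exact le_of_tendsto_of_tendsto' (hfg.hasSum.tendsto_sum_nat.pow 2)
    (hf.hasSum.tendsto_sum_nat.mul hg.hasSum.tendsto_sum_nat)
    (fun N => Finset.sum_mul_sq_le_sq_mul_sq _ _ _)

private lemma tsum_lam_s_le {lam : ℕ → ℝ} (hanti : Antitone lam) (hnn : ∀ i, 0 ≤ lam i)
    (hsum : Summable lam) {s : ℕ → ℝ} (hs0 : ∀ l, 0 ≤ s l) (hs1 : ∀ l, s l ≤ 1)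
    {m : ℕ} (hss : HasSum s m) :
    ∑' l, lam l * s l ≤ ∑ l ∈ Finset.range m, lam l := by
  have hls : Summable fun l => lam l * s l :=
    Summable.of_nonneg_of_le (fun l => mul_nonneg (hnn l) (hs0 l))
      (fun l => by nlinarith [hnn l, hs0 l, hs1 l]) hsum
  have hsplit := Summable.sum_add_tsum_nat_add m hls
  have htail : ∑' l, lam (l + m) * s (l + m) ≤ lam m * ∑' l, s (l + m) := by
    rw [← tsum_mul_left]
    refine Summable.tsum_le_tsum (fun l => ?_) ((summable_nat_add_iff m).2 hls)
      (((summable_nat_add_iff m).2 hss.summable).mul_left _)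
    have h1 : lam (l + m) ≤ lam m := hanti (Nat.le_add_left m l)
    nlinarith [hs0 (l + m), hnn (l + m)]
  have hstail : ∑' l, s (l + m) = (m : ℝ) - ∑ l ∈ Finset.range m, s l := by
    have := Summable.sum_add_tsum_nat_add m hss.summable
    rw [hss.tsum_eq] at this
    linarith
  have h2 : lam m * ∑' l, s (l + m) ≤ ∑ l ∈ Finset.range m, lam l * (1 - s l) := by
    rw [hstail]
    have he : lam m * ((m : ℝ) - ∑ l ∈ Finset.range m, s l)
        = ∑ l ∈ Finset.range m, lam m * (1 - s l) := by
      simp only [mul_sub, mul_one, Finset.sum_sub_distrib, Finset.sum_const,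
        Finset.card_range, nsmul_eq_mul, Finset.mul_sum]
      ring
    rw [he]
    refine Finset.sum_le_sum fun l hl => ?_
    have h1 : lam m ≤ lam l := hanti (Finset.mem_range.mp hl).le
    nlinarith [hs1 l]
  have hfin : ∑ l ∈ Finset.range m, lam l * s l + ∑ l ∈ Finset.range m, lam l * (1 - s l)
      = ∑ l ∈ Finset.range m, lam l := by
    rw [← Finset.sum_add_distrib]
    refine Finset.sum_congr rfl fun l _ => by ring
  have := htail.trans h2
  linarith

private lemma col_sq_le_one {m : ℕ} {b : Fin m → ℕ → ℝ}
    (hgram : ∀ j j', HasSum (fun l => b j l * b j' l) (if j = j' then 1 else 0)) (l : ℕ) :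
    ∑ j, b j l ^ 2 ≤ 1 := by
  classical
  set s : ℝ := ∑ j, b j l ^ 2 with hs
  have hsnn : 0 ≤ s := Finset.sum_nonneg fun _ _ => sq_nonneg _
  set w : ℕ → ℝ := fun r => ∑ j, b j l * b j r with hw
  have hwsq : HasSum (fun r => w r ^ 2) s := by
    have h1 : ∀ r, w r ^ 2 = ∑ j, ∑ j', (b j l * b j' l) * (b j r * b j' r) := by
      intro r
      rw [hw, sq, Finset.sum_mul_sum]
      exact Finset.sum_congr rfl fun j _ => Finset.sum_congr rfl fun j' _ => by ring
    have h2 : HasSum (fun r => ∑ j : Fin m, ∑ j' : Fin m, (b j l * b j' l) * (b j r * b j' r))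
        (∑ j : Fin m, ∑ j' : Fin m, (b j l * b j' l) * (if j = j' then 1 else 0)) := by
      refine hasSum_sum fun j _ => hasSum_sum fun j' _ => (hgram j j').mul_left _
    simp only [mul_ite, mul_one, mul_zero, Finset.sum_ite_eq', Finset.mem_univ,
      if_true] at h2
    have h3 : ∑ j : Fin m, b j l * b j l = s := by
      rw [hs]; exact Finset.sum_congr rfl fun j _ => (sq (b j l)).symm ▸ (sq (b j l)) ▸ rfl
    rw [funext h1]
    convert h2 using 1
    rw [hs]
    refine Finset.sum_congr rfl fun j _ => ?_
    simp [sq, Finset.sum_ite_eq]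
  have hwl : w l = s := by
    rw [hw, hs]
    exact Finset.sum_congr rfl fun j _ => by rw [sq]
  have hle : s ^ 2 ≤ s := by
    calc s ^ 2 = w l ^ 2 := by rw [hwl]
    _ ≤ ∑' r, w r ^ 2 := Summable.le_tsum hwsq.summable l fun r _ => sq_nonneg _
    _ = s := hwsq.tsum_eq
  nlinarith

set_option maxHeartbeats 2000000 in
/-- Any upper-confidence-bound estimator `G` mapping the unit ball of `H` to `C(X)` that
depends only on the `n` point evaluations `⟪f, Φ(x_i)⟫` has worst-case average excess
at least `Σ_{i=n+1}^∞ λ_i`. -/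
theorem worst_case_ucb_excess_ge_tail
    {X : Type*} [MetricSpace X] [CompactSpace X] [MeasurableSpace X] [BorelSpace X]
    (ρ : Measure X) [IsProbabilityMeasure ρ]
    {H : Type*} [NormedAddCommGroup H] [InnerProductSpace ℝ H] [CompleteSpace H]
    (Φ : X → H) (hΦc : Continuous Φ) (hΦ : ∀ x, ‖Φ x‖ ≤ 1)
    (lam : ℕ → ℝ) (hlam_anti : Antitone lam) (hlam_nonneg : ∀ i, 0 ≤ lam i)
    (ψ : ℕ → X → ℝ) (hψc : ∀ i, Continuous (ψ i))
    (horth : ∀ i j, ∫ x, ψ i x * ψ j x ∂ρ = if i = j then 1 else 0)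
    (heig : ∀ i x, ∫ y, ⟪Φ x, Φ y⟫ * ψ i y ∂ρ = lam i * ψ i x)
    (hmercer : ∀ x y, HasSum (fun i => lam i * ψ i x * ψ i y) ⟪Φ x, Φ y⟫)
    (n : ℕ) (pts : Fin n → X) (G : H → C(X, ℝ))
    (hG : ∀ f f' : H, ‖f‖ ≤ 1 → ‖f'‖ ≤ 1 →
      (∀ i, ⟪f, Φ (pts i)⟫ = ⟪f', Φ (pts i)⟫) → G f = G f')
    (hUCB : ∀ f : H, ‖f‖ ≤ 1 → ∀ x : X, ⟪f, Φ x⟫ ≤ G f x) :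
    ENNReal.ofReal (∑' i : ℕ, lam (n + i)) ≤
      ⨆ (f : H) (_ : ‖f‖ ≤ 1), ENNReal.ofReal (∫ x, (G f x - ⟪f, Φ x⟫) ∂ρ) := by
  classical
  -- integrability of continuous functions
  have hInt : ∀ f : X → ℝ, Continuous f → Integrable f ρ := fun f hf =>
    hf.integrable_of_hasCompactSupport (HasCompactSupport.of_compactSpace f)
  have hkc : Continuous fun x => ⟪Φ x, Φ x⟫ := hΦc.inner hΦc
  have hkxx_int : Integrable (fun x => ⟪Φ x, Φ x⟫) ρ := hInt _ hkc
  -- partial sums of lam are below ∫ k(x,x)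
  have hpartial : ∀ N : ℕ, ∑ l ∈ Finset.range N, lam l ≤ ∫ x, ⟪Φ x, Φ x⟫ ∂ρ := by
    intro N
    have h1 : ∫ x, ∑ l ∈ Finset.range N, lam l * ψ l x * ψ l x ∂ρ
        = ∑ l ∈ Finset.range N, lam l := by
      rw [integral_finset_sum _ fun l _ =>
        hInt (fun x => lam l * ψ l x * ψ l x) (((continuous_const.mul (hψc l)).mul (hψc l)))]
      refine Finset.sum_congr rfl fun l _ => ?_
      simp_rw [mul_assoc]
      rw [MeasureTheory.integral_const_mul, horth l l, if_pos rfl, mul_one]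
    rw [← h1]
    refine integral_mono (hInt _ (by continuity)) hkxx_int fun x => ?_
    exact sum_le_hasSum _ (fun l _ => by
      rw [mul_assoc]; exact mul_nonneg (hlam_nonneg l) (mul_self_nonneg _)) (hmercer x x)
  have hlam_summable : Summable lam := by
    refine summable_of_sum_range_le hlam_nonneg fun N => hpartial N
  have hlam_tsum_le : ∑' l, lam l ≤ ∫ x, ⟪Φ x, Φ x⟫ ∂ρ :=
    Summable.tsum_le_of_sum_range_le hlam_summable hpartial
  -- the span of the observation features
  set V : Submodule ℝ H := Submodule.span ℝ (Set.range fun i => Φ (pts i)) with hVdef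
  haveI : FiniteDimensional ℝ V := FiniteDimensional.span_of_finite ℝ (Set.finite_range _)
  set m : ℕ := Module.finrank ℝ V with hmdef
  have hmn : m ≤ n := by
    have h := finrank_span_le_card (R := ℝ) (Set.range fun i => Φ (pts i))
    rw [Set.toFinset_range] at h
    exact h.trans ((Finset.card_image_le).trans (by simp))
  set B := stdOrthonormalBasis ℝ V with hBdef
  have hrep : ∀ j : Fin m, ∃ c : Fin n → ℝ, ∑ i, c i • Φ (pts i) = ((B j : V) : H) := by
    intro j
    exact Submodule.mem_span_range_iff_exists_fun ℝ |>.mp (B j).2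
  choose c hc using hrep
  set a : Fin m → ℕ → ℝ := fun j l => ∑ i, c j i * ψ l (pts i) with hadef
  have hH1 : ∀ (j : Fin m) (x : X),
      HasSum (fun l => lam l * a j l * ψ l x) ⟪((B j : V) : H), Φ x⟫ := by
    intro j x
    have h := hasSum_sum (s := Finset.univ)
      (f := fun (i : Fin n) (l : ℕ) => c j i * (lam l * ψ l (pts i) * ψ l x))
      (fun i _ => ((hmercer (pts i) x).mul_left (c j i)))
    have he1 : (fun l => ∑ i, c j i * (lam l * ψ l (pts i) * ψ l x))
        = fun l => lam l * a j l * ψ l x := by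
      funext l
      simp only [hadef, Finset.mul_sum, Finset.sum_mul]
      exact Finset.sum_congr rfl fun i _ => by ring
    have h2 : ⟪((B j : V) : H), Φ x⟫ = ∑ i, c j i * ⟪Φ (pts i), Φ x⟫ := by
      rw [← hc j, sum_inner]
      simp_rw [real_inner_smul_left]
    rw [h2, ← he1]
    exact h
  have hgram : ∀ j j' : Fin m, HasSum (fun l => lam l * a j l * a j' l)
      (if j = j' then 1 else 0) := by
    intro j j'
    have htarget : ⟪((B j : V) : H), ((B j' : V) : H)⟫ = if j = j' then 1 else 0 := by
      rw [← Submodule.coe_inner]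
      exact orthonormal_iff_ite.mp B.orthonormal j j'
    have h := hasSum_sum (s := Finset.univ)
      (f := fun (i : Fin n) (l : ℕ) => c j' i * (lam l * a j l * ψ l (pts i)))
      (fun i _ => (hH1 j (pts i)).mul_left (c j' i))
    have h2 : ∑ i, c j' i * ⟪((B j : V) : H), Φ (pts i)⟫
        = ⟪((B j : V) : H), ((B j' : V) : H)⟫ := by
      rw [← hc j', inner_sum]
      simp_rw [real_inner_smul_right]
    have he : (fun l => ∑ i, c j' i * (lam l * a j l * ψ l (pts i)))
        = fun l => lam l * a j l * a j' l := by
      funext l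
      simp only [hadef, Finset.mul_sum]
      exact Finset.sum_congr rfl fun i _ => by ring
    rw [← htarget, ← h2, ← he]
    exact h
  set b : Fin m → ℕ → ℝ := fun j l => Real.sqrt (lam l) * a j l with hbdef
  have hbsq : ∀ j l, b j l ^ 2 = lam l * a j l ^ 2 := by
    intro j l
    simp only [hbdef]
    rw [mul_pow, Real.sq_sqrt (hlam_nonneg l)]
  have hb : ∀ j j', HasSum (fun l => b j l * b j' l) (if j = j' then 1 else 0) := by
    intro j j'
    have he : (fun l => b j l * b j' l) = fun l => lam l * a j l * a j' l := by
      funext l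
      simp only [hbdef]
      rw [show Real.sqrt (lam l) * a j l * (Real.sqrt (lam l) * a j' l)
        = Real.sqrt (lam l) * Real.sqrt (lam l) * (a j l * a j' l) by ring,
        Real.mul_self_sqrt (hlam_nonneg l)]
      ring
    rw [he]; exact hgram j j'
  have hcol : ∀ l, ∑ j, b j l ^ 2 ≤ 1 := col_sq_le_one hb
  have hs_sum : HasSum (fun l => ∑ j, b j l ^ 2) (m : ℝ) := by
    have h := hasSum_sum (s := Finset.univ)
      (f := fun (j : Fin m) (l : ℕ) => b j l * b j l) (fun j _ => hb j j)
    simpa [sq] using h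
  have hE1 : ∀ (j : Fin m) (l : ℕ),
      ∫ x, ⟪((B j : V) : H), Φ x⟫ * ψ l x ∂ρ = lam l * a j l := by
    intro j l
    have he : (fun x => ⟪((B j : V) : H), Φ x⟫ * ψ l x)
        = fun x => ∑ i, c j i * (⟪Φ (pts i), Φ x⟫ * ψ l x) := by
      funext x
      rw [← hc j, sum_inner, Finset.sum_mul]
      exact Finset.sum_congr rfl fun i _ => by rw [real_inner_smul_left]; ring
    rw [he, integral_finset_sum _ fun i _ =>
      (hInt (fun x => ⟪Φ (pts i), Φ x⟫ * ψ l x) ((continuous_const.inner hΦc).mul (hψc l))).const_mul _]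
    simp_rw [MeasureTheory.integral_const_mul, heig l]
    simp only [hadef, Finset.mul_sum]
    exact Finset.sum_congr rfl fun i _ => by ring
  have hBnorm : ∀ j : Fin m, ‖((B j : V) : H)‖ = 1 := fun j => by
    rw [Submodule.norm_coe]
    exact B.orthonormal.1 j
  -- main per-vector integral bound
  have hI3 : ∀ j : Fin m, ∫ x, ⟪((B j : V) : H), Φ x⟫ ^ 2 ∂ρ ≤ ∑' l, lam l * b j l ^ 2 := by
    intro j
    set g : X → ℝ := fun x => ⟪((B j : V) : H), Φ x⟫ with hgdef
    have hgc : Continuous g := continuous_const.inner hΦc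
    have hgbd : ∀ x, |g x| ≤ 1 := fun x => by
      calc |g x| ≤ ‖((B j : V) : H)‖ * ‖Φ x‖ := abs_real_inner_le_norm _ _
      _ ≤ 1 := by rw [hBnorm j, one_mul]; exact hΦ x
    have hAsum : HasSum (fun l => lam l * a j l * a j l) 1 := by
      simpa using hgram j j
    have hlb_nonneg : ∀ l, 0 ≤ lam l * b j l ^ 2 := fun l =>
      mul_nonneg (hlam_nonneg l) (sq_nonneg _)
    have haa_nonneg : ∀ l, 0 ≤ lam l * a j l * a j l := fun l => by
      rw [mul_assoc]; exact mul_nonneg (hlam_nonneg l) (mul_self_nonneg _)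
    have hlb_sum : Summable fun l => lam l * b j l ^ 2 := by
      refine Summable.of_nonneg_of_le hlb_nonneg (fun l => ?_)
        ((hAsum.summable).mul_left (lam 0))
      have h1 : lam l ≤ lam 0 := hlam_anti (Nat.zero_le l)
      rw [hbsq j l, sq]
      nlinarith [mul_nonneg (sub_nonneg.mpr h1)
        (mul_nonneg (hlam_nonneg l) (mul_self_nonneg (a j l)))]
    set t : ℕ → ℝ := fun N => ∑' l, lam (l + N) * a j (l + N) * a j (l + N) with htdef
    have ht_eq : ∀ N, t N = 1 - ∑ l ∈ Finset.range N, lam l * a j l * a j l := by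
      intro N
      have h := Summable.sum_add_tsum_nat_add N hAsum.summable
      rw [hAsum.tsum_eq] at h
      simp only [htdef]; linarith
    have ht_nonneg : ∀ N, 0 ≤ t N := fun N =>
      tsum_nonneg fun l => haa_nonneg (l + N)
    have hkey : ∀ N : ℕ, ∫ x, g x ^ 2 ∂ρ
        ≤ ∑ l ∈ Finset.range N, lam l * b j l ^ 2 + Real.sqrt (t N) := by
      intro N
      set S : X → ℝ := fun x => ∑ l ∈ Finset.range N, lam l * a j l * ψ l x with hSdef
      have hSc : Continuous S := by
        apply continuous_finset_sum; intro l _; exact continuous_const.mul (hψc l)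
      have hgS : ∫ x, g x * S x ∂ρ = ∑ l ∈ Finset.range N, lam l * b j l ^ 2 := by
        have he : (fun x => g x * S x)
            = fun x => ∑ l ∈ Finset.range N, (lam l * a j l) * (g x * ψ l x) := by
          funext x; simp only [hSdef, Finset.mul_sum]
          exact Finset.sum_congr rfl fun l _ => by ring
        rw [he, integral_finset_sum _ fun l _ => (hInt (fun x => g x * ψ l x) (hgc.mul (hψc l))).const_mul _]
        refine Finset.sum_congr rfl fun l _ => ?_
        rw [MeasureTheory.integral_const_mul, hE1 j l, hbsq j l]
        ring
      have hrem : ∀ x, |g x - S x| ≤ Real.sqrt (t N) := by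
        intro x
        have hsplit := Summable.sum_add_tsum_nat_add N (hH1 j x).summable
        rw [(hH1 j x).tsum_eq] at hsplit
        have hr : g x - S x = ∑' l, lam (l + N) * a j (l + N) * ψ (l + N) x := by
          simp only [hSdef, hgdef]; linarith
        have hf1 : Summable fun l =>
            (Real.sqrt (lam (l + N)) * a j (l + N)) ^ 2 := by
          have he : (fun l => (Real.sqrt (lam (l + N)) * a j (l + N)) ^ 2)
              = fun l => lam (l + N) * a j (l + N) * a j (l + N) := by
            funext l; rw [mul_pow, Real.sq_sqrt (hlam_nonneg _)]; ring
          rw [he]; exact (summable_nat_add_iff N).2 hAsum.summable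
        have hf2 : Summable fun l =>
            (Real.sqrt (lam (l + N)) * ψ (l + N) x) ^ 2 := by
          have he : (fun l => (Real.sqrt (lam (l + N)) * ψ (l + N) x) ^ 2)
              = fun l => lam (l + N) * ψ (l + N) x * ψ (l + N) x := by
            funext l; rw [mul_pow, Real.sq_sqrt (hlam_nonneg _)]; ring
          rw [he]; exact (summable_nat_add_iff N).2 (hmercer x x).summable
        have hcs := tsum_cauchy_schwarz hf1 hf2
        have hprod : (fun l => (Real.sqrt (lam (l + N)) * a j (l + N))
              * (Real.sqrt (lam (l + N)) * ψ (l + N) x))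
            = fun l => lam (l + N) * a j (l + N) * ψ (l + N) x := by
          funext l
          rw [show Real.sqrt (lam (l + N)) * a j (l + N)
              * (Real.sqrt (lam (l + N)) * ψ (l + N) x)
            = Real.sqrt (lam (l + N)) * Real.sqrt (lam (l + N))
              * (a j (l + N) * ψ (l + N) x) by ring,
            Real.mul_self_sqrt (hlam_nonneg _)]
          ring
        rw [hprod] at hcs
        have hf1v : (∑' l, (Real.sqrt (lam (l + N)) * a j (l + N)) ^ 2) = t N := by
          rw [htdef]
          congr 1
          funext l; rw [mul_pow, Real.sq_sqrt (hlam_nonneg _)]; ring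
        have hf2v : (∑' l, (Real.sqrt (lam (l + N)) * ψ (l + N) x) ^ 2) ≤ 1 := by
          have he : (fun l => (Real.sqrt (lam (l + N)) * ψ (l + N) x) ^ 2)
              = fun l => lam (l + N) * ψ (l + N) x * ψ (l + N) x := by
            funext l; rw [mul_pow, Real.sq_sqrt (hlam_nonneg _)]; ring
          rw [he]
          have hsplit2 := Summable.sum_add_tsum_nat_add N (hmercer x x).summable
          rw [(hmercer x x).tsum_eq] at hsplit2
          have hpartnn : 0 ≤ ∑ l ∈ Finset.range N, lam l * ψ l x * ψ l x :=
            Finset.sum_nonneg fun l _ => by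
              rw [mul_assoc]; exact mul_nonneg (hlam_nonneg l) (mul_self_nonneg _)
          have hk1 : ⟪Φ x, Φ x⟫ ≤ 1 := by
            rw [real_inner_self_eq_norm_sq]
            nlinarith [hΦ x, norm_nonneg (Φ x)]
          linarith
        have hf2nn : 0 ≤ ∑' l, (Real.sqrt (lam (l + N)) * ψ (l + N) x) ^ 2 :=
          tsum_nonneg fun l => sq_nonneg _
        have hsq : (g x - S x) ^ 2 ≤ t N := by
          rw [hr]
          calc (∑' l, lam (l + N) * a j (l + N) * ψ (l + N) x) ^ 2
              ≤ (∑' l, (Real.sqrt (lam (l + N)) * a j (l + N)) ^ 2)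
                * (∑' l, (Real.sqrt (lam (l + N)) * ψ (l + N) x) ^ 2) := hcs
          _ ≤ t N * 1 := by
              rw [hf1v]
              exact mul_le_mul_of_nonneg_left hf2v (ht_nonneg N)
          _ = t N := mul_one _
        have h := Real.sqrt_le_sqrt hsq
        rwa [Real.sqrt_sq_eq_abs] at h
      have hint_gS : Integrable (fun x => g x * S x) ρ := hInt _ (hgc.mul hSc)
      have hint_grem : Integrable (fun x => g x * (g x - S x)) ρ :=
        hInt _ (hgc.mul (hgc.sub hSc))
      have hsplit : ∫ x, g x ^ 2 ∂ρ
          = ∫ x, g x * S x ∂ρ + ∫ x, g x * (g x - S x) ∂ρ := by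
        rw [← integral_add hint_gS hint_grem]
        congr 1; funext x; ring
      have hbound : ∀ x, g x * (g x - S x) ≤ Real.sqrt (t N) := fun x => by
        calc g x * (g x - S x) ≤ |g x * (g x - S x)| := le_abs_self _
        _ = |g x| * |g x - S x| := abs_mul _ _
        _ ≤ 1 * Real.sqrt (t N) :=
            mul_le_mul (hgbd x) (hrem x) (abs_nonneg _) zero_le_one
        _ = Real.sqrt (t N) := one_mul _
      have hrint : ∫ x, g x * (g x - S x) ∂ρ ≤ Real.sqrt (t N) := by
        have h := integral_mono hint_grem (integrable_const _) hbound
        simpa using h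
      rw [hsplit, hgS]
      linarith
    have hT1 : Filter.Tendsto (fun N => ∑ l ∈ Finset.range N, lam l * b j l ^ 2)
        Filter.atTop (nhds (∑' l, lam l * b j l ^ 2)) := hlb_sum.hasSum.tendsto_sum_nat
    have hT2 : Filter.Tendsto (fun N => Real.sqrt (t N)) Filter.atTop (nhds 0) := by
      have h1 : Filter.Tendsto t Filter.atTop (nhds 0) := by
        have h2 := hAsum.tendsto_sum_nat
        have h3 : Filter.Tendsto
            (fun N => 1 - ∑ l ∈ Finset.range N, lam l * a j l * a j l)
            Filter.atTop (nhds (1 - 1)) := Filter.Tendsto.const_sub _ h2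
        rw [sub_self] at h3
        have he : (fun N => 1 - ∑ l ∈ Finset.range N, lam l * a j l * a j l) = t := by
          funext N; rw [ht_eq N]
        rwa [he] at h3
      have h := (Real.continuous_sqrt.tendsto 0).comp h1
      simpa [Function.comp_def] using h
    have hfin := ge_of_tendsto (hT1.add hT2) (Filter.Eventually.of_forall hkey)
    simpa using hfin
  -- the orthogonal projection
  have hON : Orthonormal ℝ (fun j : Fin m => ((B j : V) : H)) := by
    rw [orthonormal_iff_ite]
    intro i j
    rw [← Submodule.coe_inner]
    exact orthonormal_iff_ite.mp B.orthonormal i j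
  have hQ : ∀ x : X, ‖((V.orthogonalProjectionOnto (Φ x) : V) : H)‖ ^ 2
      = ∑ j, ⟪((B j : V) : H), Φ x⟫ ^ 2 := by
    intro x
    have h1 : ((V.orthogonalProjectionOnto (Φ x) : V) : H)
        = ∑ j, ⟪((B j : V) : H), Φ x⟫ • ((B j : V) : H) := by
      rw [B.orthogonalProjectionOnto_apply_eq_sum (Φ x)]
      push_cast
      rfl
    rw [← real_inner_self_eq_norm_sq, h1, hON.inner_sum]
    exact Finset.sum_congr rfl fun j _ => by simp [sq]
  have hPyth : ∀ x : X, ⟪Φ x, Φ x⟫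
      = ‖((V.orthogonalProjectionOnto (Φ x) : V) : H)‖ ^ 2
        + ‖Φ x - V.orthogonalProjectionOnto (Φ x)‖ ^ 2 := by
    intro x
    set q : H := ((V.orthogonalProjectionOnto (Φ x) : V) : H) with hq
    have horthog : ⟪q, Φ x - q⟫ = 0 := by
      have h := Submodule.starProjection_inner_eq_zero (K := V) (Φ x) q
        (V.orthogonalProjectionOnto (Φ x)).2
      rw [real_inner_comm] at h
      exact h
    have hdecomp : Φ x = q + (Φ x - q) := by abel
    calc ⟪Φ x, Φ x⟫ = ‖Φ x‖ ^ 2 := real_inner_self_eq_norm_sq _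
    _ = ‖q + (Φ x - q)‖ ^ 2 := by rw [← hdecomp]
    _ = ‖q‖ ^ 2 + 2 * ⟪q, Φ x - q⟫ + ‖Φ x - q‖ ^ 2 := norm_add_sq_real _ _
    _ = _ := by rw [horthog]; ring
  -- pointwise UCB lower bound
  have hG0 : ∀ x : X, ‖Φ x - V.orthogonalProjectionOnto (Φ x)‖ ^ 2 ≤ G 0 x := by
    intro x
    set p : H := Φ x - V.orthogonalProjectionOnto (Φ x) with hp
    have hpV : p ∈ Vᗮ := Submodule.sub_starProjection_mem_orthogonal (K := V) (Φ x)
    have hq0 : ⟪p, ((V.orthogonalProjectionOnto (Φ x) : V) : H)⟫ = 0 := by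
      have h := (Submodule.mem_orthogonal V p).mp hpV _ (V.orthogonalProjectionOnto (Φ x)).2
      rw [real_inner_comm] at h
      exact h
    have hpnorm2 : ⟪p, Φ x⟫ = ‖p‖ ^ 2 := by
      have hdecomp : Φ x = ((V.orthogonalProjectionOnto (Φ x) : V) : H) + p := by
        rw [hp]; abel
      rw [hdecomp, inner_add_right, hq0, real_inner_self_eq_norm_sq]
      ring
    by_cases hz : p = 0
    · rw [hz, norm_zero]
      have h := hUCB 0 (by simp) x
      simpa using h
    · set f : H := ‖p‖⁻¹ • p with hf
      have hpn : ‖p‖ ≠ 0 := norm_ne_zero_iff.mpr hz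
      have hfn : ‖f‖ = 1 := by
        rw [hf, norm_smul, norm_inv, norm_norm, inv_mul_cancel₀ hpn]
      have hGf : G f = G 0 := by
        refine hG f 0 (le_of_eq hfn) (by simp) fun i => ?_
        have hmem : Φ (pts i) ∈ V := Submodule.subset_span ⟨i, rfl⟩
        have h0 : ⟪Φ (pts i), p⟫ = 0 := (Submodule.mem_orthogonal V p).mp hpV _ hmem
        rw [hf, real_inner_smul_left, real_inner_comm, h0, inner_zero_left]
        ring
      have hUCBx := hUCB f (le_of_eq hfn) x
      rw [hGf] at hUCBx
      have hfx : ⟪f, Φ x⟫ = ‖p‖ := by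
        rw [hf, real_inner_smul_left, hpnorm2, sq]
        field_simp
      rw [hfx] at hUCBx
      have hple : ‖p‖ ≤ 1 := by
        have h := hPyth x
        have h2 : ⟪Φ x, Φ x⟫ ≤ 1 := by
          rw [real_inner_self_eq_norm_sq]
          nlinarith [hΦ x, norm_nonneg (Φ x)]
        rw [← hp] at h
        nlinarith [norm_nonneg p, sq_nonneg ‖((V.orthogonalProjectionOnto (Φ x) : V) : H)‖]
      nlinarith [norm_nonneg p]
  -- summability of the diagonal terms (as in hI3)
  have hlbsum : ∀ j : Fin m, Summable fun l => lam l * b j l ^ 2 := by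
    intro j
    have hAsum : HasSum (fun l => lam l * a j l * a j l) 1 := by simpa using hgram j j
    refine Summable.of_nonneg_of_le (fun l => mul_nonneg (hlam_nonneg l) (sq_nonneg _))
      (fun l => ?_) ((hAsum.summable).mul_left (lam 0))
    have h1 : lam l ≤ lam 0 := hlam_anti (Nat.zero_le l)
    rw [hbsq j l, sq]
    nlinarith [mul_nonneg (sub_nonneg.mpr h1)
      (mul_nonneg (hlam_nonneg l) (mul_self_nonneg (a j l)))]
  -- integral of the projected norm
  have hQint : Integrable (fun x => ‖((V.orthogonalProjectionOnto (Φ x) : V) : H)‖ ^ 2) ρ := by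
    have he : (fun x => ‖((V.orthogonalProjectionOnto (Φ x) : V) : H)‖ ^ 2)
        = fun x => ∑ j, ⟪((B j : V) : H), Φ x⟫ ^ 2 := funext hQ
    rw [he]
    exact hInt _ (continuous_finset_sum _ fun j _ => (continuous_const.inner hΦc).pow 2)
  have hQbound : ∫ x, ‖((V.orthogonalProjectionOnto (Φ x) : V) : H)‖ ^ 2 ∂ρ
      ≤ ∑ l ∈ Finset.range n, lam l := by
    have h1 : ∫ x, ‖((V.orthogonalProjectionOnto (Φ x) : V) : H)‖ ^ 2 ∂ρ
        = ∑ j, ∫ x, ⟪((B j : V) : H), Φ x⟫ ^ 2 ∂ρ := by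
      rw [funext hQ]
      exact integral_finset_sum _ fun j _ => hInt _ ((continuous_const.inner hΦc).pow 2)
    calc ∫ x, ‖((V.orthogonalProjectionOnto (Φ x) : V) : H)‖ ^ 2 ∂ρ
        = ∑ j, ∫ x, ⟪((B j : V) : H), Φ x⟫ ^ 2 ∂ρ := h1
    _ ≤ ∑ j, ∑' l, lam l * b j l ^ 2 := Finset.sum_le_sum fun j _ => hI3 j
    _ = ∑' l, ∑ j, lam l * b j l ^ 2 := (Summable.tsum_finsetSum fun j _ => hlbsum j).symm
    _ = ∑' l, lam l * ∑ j, b j l ^ 2 := by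
        congr 1; funext l; rw [Finset.mul_sum]
    _ ≤ ∑ l ∈ Finset.range m, lam l := tsum_lam_s_le hlam_anti hlam_nonneg hlam_summable
        (fun l => Finset.sum_nonneg fun j _ => sq_nonneg _) hcol hs_sum
    _ ≤ ∑ l ∈ Finset.range n, lam l := Finset.sum_le_sum_of_subset_of_nonneg
        (Finset.range_subset_range.2 hmn) fun l _ _ => hlam_nonneg l
  have hPint : Integrable (fun x => ‖Φ x - V.orthogonalProjectionOnto (Φ x)‖ ^ 2) ρ := by
    have he : (fun x => ‖Φ x - (V.orthogonalProjectionOnto (Φ x) : H)‖ ^ 2)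
        = fun x => ⟪Φ x, Φ x⟫ - ‖((V.orthogonalProjectionOnto (Φ x) : V) : H)‖ ^ 2 := by
      funext x; have h := hPyth x; linarith
    rw [he]
    exact hkxx_int.sub hQint
  have hmain : ∑' i, lam (n + i) ≤ ∫ x, G 0 x ∂ρ := by
    have htail : ∑' i, lam (n + i) = (∑' l, lam l) - ∑ l ∈ Finset.range n, lam l := by
      have h := Summable.sum_add_tsum_nat_add n hlam_summable
      have he : (∑' i, lam (n + i)) = ∑' i, lam (i + n) := by
        congr 1; funext i; rw [Nat.add_comm]
      rw [he]; linarith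
    have h1 : ∫ x, ‖Φ x - V.orthogonalProjectionOnto (Φ x)‖ ^ 2 ∂ρ
        = ∫ x, ⟪Φ x, Φ x⟫ ∂ρ
          - ∫ x, ‖((V.orthogonalProjectionOnto (Φ x) : V) : H)‖ ^ 2 ∂ρ := by
      rw [← integral_sub hkxx_int hQint]
      congr 1; funext x; have h := hPyth x; linarith
    have h2 : ∫ x, ‖Φ x - V.orthogonalProjectionOnto (Φ x)‖ ^ 2 ∂ρ ≤ ∫ x, G 0 x ∂ρ :=
      integral_mono hPint (hInt _ (G 0).continuous) hG0
    rw [htail]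
    linarith [hlam_tsum_le, hQbound]
  refine le_trans ?_ (le_iSup₂_of_le (0 : H) (by simp) le_rfl)
  apply ENNReal.ofReal_le_ofReal
  have he : ∫ x, (G 0 x - ⟪(0 : H), Φ x⟫) ∂ρ = ∫ x, G 0 x ∂ρ := by
    simp [inner_zero_left]
  rw [he]
  exact hmain
end

section
/- For any points x_1,…,x_n ∈ X, the squared distance from Φ(x) to the linear span of {Φ(x_1),…,Φ(x_n)} satisfies ∫_X dist( Φ(x), span{Φ(x_1),…,Φ(x_n)} )² dρ(x) ≥ Σ_{l=n+1}^∞ λ_l. Equivalently, ∫_X sup{ |⟨f, Φ(x)⟩|² : f ∈ H, ‖f‖ ≤ 1, ⟨f, Φ(x_i)⟩ = 0 for all i } dρ(x) ≥ Σ_{l=n+1}^∞ λ_l. -/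
open MeasureTheory
open scoped RealInnerProductSpace

open Filter Topology Finset

lemma aux_tail_bound (lam t : ℕ → ℝ) (n : ℕ) (ha : Antitone lam) (h0 : ∀ i, 0 ≤ lam i)
    (hlam : Summable lam) (ht0 : ∀ i, 0 ≤ t i) (ht1 : ∀ i, t i ≤ 1) (hts : Summable t)
    (htn : ∑' i, t i ≤ n) :
    ∑' i, lam i * t i ≤ ∑ i ∈ Finset.range n, lam i := by
  have hlt : Summable (fun i => lam i * t i) := by
    refine Summable.of_nonneg_of_le (fun i => mul_nonneg (h0 i) (ht0 i)) (fun i => ?_) hlam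
    calc lam i * t i ≤ lam i * 1 := by
          exact mul_le_mul_of_nonneg_left (ht1 i) (h0 i)
      _ = lam i := mul_one _
  have hsplit := Summable.sum_add_tsum_nat_add (f := fun i => lam i * t i) n hlt
  have htail : ∑' i, lam (i + n) * t (i + n) ≤ lam n * (n - ∑ i ∈ Finset.range n, t i) := by
    have h1 : ∑' i, lam (i + n) * t (i + n) ≤ ∑' i, lam n * t (i + n) := by
      refine Summable.tsum_le_tsum (fun i => ?_) ((summable_nat_add_iff n).2 hlt)
        (((summable_nat_add_iff n).2 hts).mul_left _)
      exact mul_le_mul_of_nonneg_right (ha (Nat.le_add_left n i)) (ht0 _)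
    have h2 : ∑' i, lam n * t (i + n) = lam n * ∑' i, t (i + n) := tsum_mul_left
    have h3 : ∑' i, t (i + n) ≤ n - ∑ i ∈ Finset.range n, t i := by
      have := Summable.sum_add_tsum_nat_add (f := t) n hts
      linarith
    calc ∑' i, lam (i + n) * t (i + n) ≤ lam n * ∑' i, t (i + n) := by rw [← h2]; exact h1
      _ ≤ lam n * (n - ∑ i ∈ Finset.range n, t i) :=
          mul_le_mul_of_nonneg_left h3 (h0 n)
  have hfin : ∑ i ∈ Finset.range n, lam i * t i + lam n * (n - ∑ i ∈ Finset.range n, t i)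
      ≤ ∑ i ∈ Finset.range n, lam i := by
    have : lam n * ((n : ℝ) - ∑ i ∈ Finset.range n, t i)
        = ∑ i ∈ Finset.range n, lam n * (1 - t i) := by
      rw [Finset.sum_congr rfl (fun i _ => mul_sub (lam n) 1 (t i))]
      rw [Finset.sum_sub_distrib, ← Finset.mul_sum, mul_sub, Finset.mul_sum]
      simp
    rw [this, ← Finset.sum_add_distrib]
    refine Finset.sum_le_sum (fun i hi => ?_)
    have hin : lam n ≤ lam i := ha (Finset.mem_range.mp hi).le
    nlinarith [h0 i, ht0 i, ht1 i, ha (Finset.mem_range.mp hi).le]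
  linarith

set_option maxHeartbeats 2000000

/-- For any points `x_1,…,x_n`, the average (w.r.t. `ρ`) squared distance from `Φ(x)` to
`span{Φ(x_1),…,Φ(x_n)}` is at least the tail sum `Σ_{l=n+1}^∞ λ_l` of the eigenvalues of
the kernel integral operator. -/
theorem integral_sq_dist_span_ge_tail
    {X : Type*} [MetricSpace X] [CompactSpace X] [MeasurableSpace X] [BorelSpace X]
    (ρ : Measure X) [IsProbabilityMeasure ρ]
    {H : Type*} [NormedAddCommGroup H] [InnerProductSpace ℝ H] [CompleteSpace H]
    (Φ : X → H) (hΦc : Continuous Φ) (hΦ : ∀ x, ‖Φ x‖ ≤ 1)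
    (lam : ℕ → ℝ) (hlam_anti : Antitone lam) (hlam_nonneg : ∀ i, 0 ≤ lam i)
    (ψ : ℕ → X → ℝ) (hψc : ∀ i, Continuous (ψ i))
    (horth : ∀ i j, ∫ x, ψ i x * ψ j x ∂ρ = if i = j then 1 else 0)
    (heig : ∀ i x, ∫ y, ⟪Φ x, Φ y⟫ * ψ i y ∂ρ = lam i * ψ i x)
    (hmercer : ∀ x y, HasSum (fun i => lam i * ψ i x * ψ i y) ⟪Φ x, Φ y⟫)
    (n : ℕ) (pts : Fin n → X) :
    ∑' i : ℕ, lam (n + i) ≤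
      ∫ x, Metric.infDist (Φ x)
          (Submodule.span ℝ (Set.range fun i => Φ (pts i)) : Set H) ^ 2 ∂ρ := by
  classical
  -- integrability of continuous functions
  have hintR : ∀ {f : X → ℝ}, Continuous f → Integrable f ρ := fun hf =>
    hf.integrable_of_hasCompactSupport (HasCompactSupport.of_compactSpace _)
  have hintH : ∀ {f : X → H}, Continuous f → Integrable f ρ := fun hf =>
    hf.integrable_of_hasCompactSupport (HasCompactSupport.of_compactSpace _)
  set V : Submodule ℝ H := Submodule.span ℝ (Set.range fun i => Φ (pts i)) with hVdef
  haveI : FiniteDimensional ℝ V := FiniteDimensional.span_of_finite ℝ (Set.finite_range _)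
  set m : ℕ := Module.finrank ℝ V with hmdef
  have hmn : m ≤ n := by
    simpa [Set.finrank] using finrank_range_le_card (R := ℝ) (fun i => Φ (pts i))
  set b := stdOrthonormalBasis ℝ V with hbdef
  set e : Fin m → H := fun j => (b j : H) with hedef
  have he_norm : ∀ j, ‖e j‖ = 1 := fun j => by
    exact b.orthonormal.1 j
  set P : H → H := fun v => (V.orthogonalProjectionOnto v : H) with hPdef
  -- eigenvector candidates
  set u : ℕ → H := fun i => ∫ y, ψ i y • Φ y ∂ρ with hudef
  have hu_val : ∀ i, u i = ∫ y, ψ i y • Φ y ∂ρ := fun _ => rfl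
  have hu_int : ∀ i, Integrable (fun y => ψ i y • Φ y) ρ := fun i =>
    hintH ((hψc i).smul hΦc)
  have hPhiu : ∀ i x, ⟪Φ x, u i⟫ = lam i * ψ i x := by
    intro i x
    rw [hudef, ← integral_inner (hu_int i)]
    simp_rw [real_inner_smul_right]
    simp_rw [mul_comm (ψ i _)]
    exact heig i x
  have huu : ∀ i j, ⟪u i, u j⟫ = if i = j then lam i else 0 := by
    intro i j
    rw [hu_val j, ← integral_inner (hu_int j)]
    have : ∀ y, ⟪u i, ψ j y • Φ y⟫ = lam i * (ψ i y * ψ j y) := by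
      intro y
      rw [real_inner_smul_right, real_inner_comm, hPhiu]
      ring
    simp_rw [this]
    rw [integral_const_mul, horth i j]
    by_cases h : i = j <;> simp [h]
  have hnormu : ∀ i, ‖u i‖ ^ 2 = lam i := fun i => by
    rw [← real_inner_self_eq_norm_sq, huu i i, if_pos rfl]
  set φ : ℕ → H := fun i => (Real.sqrt (lam i))⁻¹ • u i with hφdef
  have hφzero : ∀ i, lam i = 0 → φ i = 0 := by
    intro i h
    have : ‖u i‖ = 0 := by
      have := hnormu i; rw [h] at this; nlinarith [norm_nonneg (u i)]
    simp [hφdef, norm_eq_zero.mp this]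
  have hu_eq : ∀ i, u i = Real.sqrt (lam i) • φ i := by
    intro i
    rcases eq_or_lt_of_le (hlam_nonneg i) with h | h
    · have : ‖u i‖ = 0 := by
        have := hnormu i; rw [← h] at this; nlinarith [norm_nonneg (u i)]
      simp [hφdef, norm_eq_zero.mp this]
    · rw [hφdef]
      rw [smul_inv_smul₀ (by positivity)]
  have hPhiφ : ∀ i x, ⟪Φ x, φ i⟫ = Real.sqrt (lam i) * ψ i x := by
    intro i x
    rcases eq_or_lt_of_le (hlam_nonneg i) with h | h
    · rw [hφzero i h.symm, inner_zero_right, ← h]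
      simp
    · have hs : (0:ℝ) < Real.sqrt (lam i) := Real.sqrt_pos.mpr h
      rw [hφdef, real_inner_smul_right, hPhiu]
      field_simp
      linear_combination (-(ψ i x)) * Real.sq_sqrt (hlam_nonneg i)
  have hφnorm_sq : ∀ i, ‖φ i‖ ^ 2 = if 0 < lam i then 1 else 0 := by
    intro i
    rcases eq_or_lt_of_le (hlam_nonneg i) with h | h
    · rw [hφzero i h.symm, if_neg (by rw [← h]; simp)]; simp
    · rw [if_pos h, hφdef, norm_smul, mul_pow, hnormu i]
      rw [norm_inv, Real.norm_eq_abs, abs_of_nonneg (Real.sqrt_nonneg _)]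
      rw [← Real.sqrt_mul_self (hlam_nonneg i)] 
      field_simp
      rw [Real.sq_sqrt (Real.sqrt_nonneg _)]
  have hφφ : ∀ i j, ⟪φ i, φ j⟫ = if i = j ∧ 0 < lam i then 1 else 0 := by
    intro i j
    by_cases hi : 0 < lam i
    · by_cases hj : 0 < lam j
      · rw [hφdef]
        simp only [real_inner_smul_left, real_inner_smul_right, huu i j]
        by_cases h : i = j
        · subst h
          rw [if_pos rfl, if_pos ⟨rfl, hi⟩]
          rw [← Real.sqrt_mul_self (hlam_nonneg i)]
          field_simp
          rw [Real.sq_sqrt (Real.sqrt_nonneg _)]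
        · rw [if_neg h, if_neg (by tauto)]; ring
      · have hj0 : lam j = 0 := le_antisymm (not_lt.mp hj) (hlam_nonneg j)
        rw [hφzero j hj0, inner_zero_right, if_neg]
        exact fun h => hj (h.1 ▸ h.2)
    · rw [hφzero i (le_antisymm (not_lt.mp hi) (hlam_nonneg i)), inner_zero_left,
        if_neg (by tauto)]
  -- sum of squared coefficients equals squared norm (Mercer)
  have hPhiSq : ∀ x, HasSum (fun i => ⟪Φ x, φ i⟫ ^ 2) (‖Φ x‖ ^ 2) := by
    intro x
    have := hmercer x x
    rw [real_inner_self_eq_norm_sq] at this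
    convert this using 2 with i
    rw [hPhiφ, mul_pow, Real.sq_sqrt (hlam_nonneg i)]
    ring
  have hMsq : ∀ x, HasSum (fun i => lam i * ψ i x ^ 2) (‖Φ x‖ ^ 2) := by
    intro x
    have := hmercer x x
    rw [real_inner_self_eq_norm_sq] at this
    convert this using 2 with i
    ring
  clear_value φ
  clear_value u
  -- partial sums of the expansion of Φ x
  set w : ℕ → X → H := fun N x => ∑ i ∈ range N, ⟪Φ x, φ i⟫ • φ i with hwdef
  have hw_inner : ∀ (v : H) N x, ⟪w N x, v⟫ = ∑ i ∈ range N, ⟪Φ x, φ i⟫ * ⟪φ i, v⟫ := by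
    intro v N x
    simp only [hwdef, sum_inner, real_inner_smul_left]
  have hcsq : ∀ N x, ∑ i ∈ range N, ⟪Φ x, φ i⟫ ^ 2 ≤ ‖Φ x‖ ^ 2 := fun N x =>
    sum_le_hasSum _ (fun i _ => sq_nonneg _) (hPhiSq x)
  have hdiag : ∀ (x : X) (i j : ℕ),
      (⟪Φ x, φ i⟫ * ⟪Φ x, φ j⟫) * ⟪φ i, φ j⟫ = if i = j then ⟪Φ x, φ j⟫ ^ 2 else 0 := by
    intro x i j
    rw [hφφ]
    by_cases hij : i = j
    · subst hij
      by_cases hi : 0 < lam i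
      · rw [if_pos (show i = i ∧ 0 < lam i from ⟨rfl, hi⟩), if_pos rfl, mul_one, sq]
      · have hc : ⟪Φ x, φ i⟫ = 0 := by
          rw [hφzero i (le_antisymm (not_lt.mp hi) (hlam_nonneg i)), inner_zero_right]
        simp [hc]
    · simp [hij]
  have hw_normsq : ∀ N x, ‖w N x‖ ^ 2 = ∑ i ∈ range N, ⟪Φ x, φ i⟫ ^ 2 := by
    intro N x
    rw [← real_inner_self_eq_norm_sq]
    have h1 : ⟪w N x, w N x⟫
        = ∑ j ∈ range N, ∑ i ∈ range N, (⟪Φ x, φ i⟫ * ⟪Φ x, φ j⟫) * ⟪φ i, φ j⟫ := by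
      simp only [hwdef, inner_sum, sum_inner, real_inner_smul_left, real_inner_smul_right]
      exact Finset.sum_congr rfl fun j _ => Finset.sum_congr rfl fun i _ => by ring
    rw [h1]
    refine Finset.sum_congr rfl fun j hj => ?_
    rw [Finset.sum_congr rfl (fun i _ => hdiag x i j), Finset.sum_ite_eq' (range N) j]
    rw [if_pos hj]
  have hw_le : ∀ N x, ‖w N x‖ ≤ 1 := by
    intro N x
    have h1 := hw_normsq N x
    have h2 := hcsq N x
    have h3 : ‖Φ x‖ ^ 2 ≤ 1 := by nlinarith [hΦ x, norm_nonneg (Φ x)]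
    nlinarith [norm_nonneg (w N x)]
  have hw_cont : ∀ N, Continuous (w N) := by
    intro N
    exact continuous_finset_sum _ fun i _ => (hΦc.inner continuous_const).smul continuous_const
  have hw_tendsto : ∀ x, Tendsto (fun N => w N x) atTop (𝓝 (Φ x)) := by
    intro x
    have hdiff : ∀ N, ‖Φ x - w N x‖ ^ 2 = ‖Φ x‖ ^ 2 - ∑ i ∈ range N, ⟪Φ x, φ i⟫ ^ 2 := by
      intro N
      rw [norm_sub_sq_real, hw_normsq]
      have h2 : ⟪Φ x, w N x⟫ = ∑ i ∈ range N, ⟪Φ x, φ i⟫ ^ 2 := by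
        rw [real_inner_comm, hw_inner]
        exact Finset.sum_congr rfl fun i _ => by rw [real_inner_comm]; ring
      rw [h2]; ring
    have h2 : Tendsto (fun N => ‖Φ x - w N x‖ ^ 2) atTop (𝓝 0) := by
      have h3 := (hPhiSq x).tendsto_sum_nat
      have h4 : Tendsto (fun N => ‖Φ x‖ ^ 2 - ∑ i ∈ range N, ⟪Φ x, φ i⟫ ^ 2) atTop
          (𝓝 (‖Φ x‖ ^ 2 - ‖Φ x‖ ^ 2)) := tendsto_const_nhds.sub h3
      rw [sub_self] at h4
      simpa only [hdiff] using h4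
    have h3 : Tendsto (fun N => ‖Φ x - w N x‖) atTop (𝓝 0) := by
      have h5 : Tendsto (fun N => Real.sqrt (‖Φ x - w N x‖ ^ 2)) atTop (𝓝 (Real.sqrt 0)) :=
        (Real.continuous_sqrt.tendsto 0).comp h2
      rw [Real.sqrt_zero] at h5
      exact h5.congr fun N => Real.sqrt_sq (norm_nonneg _)
    rw [tendsto_iff_norm_sub_tendsto_zero]
    simpa only [norm_sub_rev] using h3
  clear_value w
  -- KEY: spectral representation of ∫ ⟪Φ x, v⟫²
  have keyA : ∀ v : H, ‖v‖ ≤ 1 →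
      HasSum (fun i => lam i * ⟪φ i, v⟫ ^ 2) (∫ x, ⟪Φ x, v⟫ ^ 2 ∂ρ) := by
    intro v hv
    have hterm : ∀ i, ∫ x, ⟪Φ x, v⟫ * (⟪Φ x, φ i⟫ * ⟪φ i, v⟫) ∂ρ = lam i * ⟪φ i, v⟫ ^ 2 := by
      intro i
      have h1 : ∀ x, ⟪Φ x, v⟫ * (⟪Φ x, φ i⟫ * ⟪φ i, v⟫)
          = (⟪φ i, v⟫ * Real.sqrt (lam i)) * (ψ i x * ⟪v, Φ x⟫) := by
        intro x; rw [hPhiφ, real_inner_comm v (Φ x)]; ring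
      simp_rw [h1]
      rw [integral_const_mul]
      have h2 : ∫ x, ψ i x * ⟪v, Φ x⟫ ∂ρ = ⟪v, u i⟫ := by
        rw [hu_val i, ← integral_inner (hu_int i)]
        simp_rw [real_inner_smul_right]
      rw [h2, hu_eq i, real_inner_smul_right, real_inner_comm (φ i) v]
      linear_combination (⟪φ i, v⟫ ^ 2) * Real.mul_self_sqrt (hlam_nonneg i)
    have hFN : ∀ N, ∫ x, ⟪Φ x, v⟫ * ⟪w N x, v⟫ ∂ρ = ∑ i ∈ range N, lam i * ⟪φ i, v⟫ ^ 2 := by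
      intro N
      have h1 : ∀ x, ⟪Φ x, v⟫ * ⟪w N x, v⟫
          = ∑ i ∈ range N, ⟪Φ x, v⟫ * (⟪Φ x, φ i⟫ * ⟪φ i, v⟫) := by
        intro x; rw [hw_inner, Finset.mul_sum]
      simp_rw [h1]
      rw [integral_finset_sum _ (fun i _ => hintR (f := fun x => ⟪Φ x, v⟫ * (⟪Φ x, φ i⟫ * ⟪φ i, v⟫)) ((hΦc.inner continuous_const).mul
        (((hΦc.inner continuous_const)).mul continuous_const)))]
      exact Finset.sum_congr rfl fun i _ => hterm i
    have hlim : Tendsto (fun N => ∫ x, ⟪Φ x, v⟫ * ⟪w N x, v⟫ ∂ρ) atTop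
        (𝓝 (∫ x, ⟪Φ x, v⟫ ^ 2 ∂ρ)) := by
      refine tendsto_integral_of_dominated_convergence (fun _ => 1) ?_ (integrable_const 1) ?_ ?_
      · intro N
        exact ((hΦc.inner continuous_const).mul
          ((hw_cont N).inner continuous_const)).aestronglyMeasurable
      · intro N
        refine Eventually.of_forall fun x => ?_
        show ‖⟪Φ x, v⟫ * ⟪w N x, v⟫‖ ≤ 1
        have h5 : |⟪Φ x, v⟫| ≤ 1 := by
          calc |⟪Φ x, v⟫| ≤ ‖Φ x‖ * ‖v‖ := abs_real_inner_le_norm _ _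
            _ ≤ 1 := by nlinarith [hΦ x, norm_nonneg (Φ x), norm_nonneg v]
        have h6 : |⟪w N x, v⟫| ≤ 1 := by
          calc |⟪w N x, v⟫| ≤ ‖w N x‖ * ‖v‖ := abs_real_inner_le_norm _ _
            _ ≤ 1 := by nlinarith [hw_le N x, norm_nonneg (w N x), norm_nonneg v]
        rw [Real.norm_eq_abs, abs_mul]
        nlinarith [abs_nonneg (⟪Φ x, v⟫), abs_nonneg (⟪w N x, v⟫)]
      · refine Eventually.of_forall fun x => ?_
        have h7 : Tendsto (fun N => ⟪w N x, v⟫) atTop (𝓝 ⟪Φ x, v⟫) :=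
          ((continuous_id.inner (continuous_const : Continuous fun _ : H => v)).tendsto
            (Φ x)).comp (hw_tendsto x)
        have h8 := (tendsto_const_nhds (x := ⟪Φ x, v⟫)).mul h7
        simpa [sq] using h8
    simp_rw [hFN] at hlim
    exact (hasSum_iff_tendsto_nat_of_nonneg
      (fun i => mul_nonneg (hlam_nonneg i) (sq_nonneg _)) _).2 hlim
  -- trace formula
  have hL : HasSum lam (∫ x, ‖Φ x‖ ^ 2 ∂ρ) := by
    have hFN : ∀ N, ∫ x, ∑ i ∈ range N, lam i * ψ i x ^ 2 ∂ρ = ∑ i ∈ range N, lam i := by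
      intro N
      rw [integral_finset_sum _ (fun i _ => hintR (f := fun x => lam i * ψ i x ^ 2) (continuous_const.mul ((hψc i).pow 2)))]
      refine Finset.sum_congr rfl fun i _ => ?_
      rw [integral_const_mul]
      simp_rw [pow_two]
      rw [horth i i, if_pos rfl, mul_one]
    have hlim : Tendsto (fun N => ∫ x, ∑ i ∈ range N, lam i * ψ i x ^ 2 ∂ρ) atTop
        (𝓝 (∫ x, ‖Φ x‖ ^ 2 ∂ρ)) := by
      refine tendsto_integral_of_dominated_convergence (fun _ => 1) ?_ (integrable_const 1) ?_ ?_
      · intro N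
        exact (continuous_finset_sum _ fun i _ =>
          continuous_const.mul ((hψc i).pow 2)).aestronglyMeasurable
      · intro N
        refine Eventually.of_forall fun x => ?_
        show ‖∑ i ∈ range N, lam i * ψ i x ^ 2‖ ≤ 1
        have h1 : 0 ≤ ∑ i ∈ range N, lam i * ψ i x ^ 2 :=
          Finset.sum_nonneg fun i _ => mul_nonneg (hlam_nonneg i) (sq_nonneg _)
        have h2 : ∑ i ∈ range N, lam i * ψ i x ^ 2 ≤ ‖Φ x‖ ^ 2 :=
          sum_le_hasSum _ (fun i _ => mul_nonneg (hlam_nonneg i) (sq_nonneg _)) (hMsq x)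
        rw [Real.norm_eq_abs, abs_of_nonneg h1]
        nlinarith [hΦ x, norm_nonneg (Φ x)]
      · exact Eventually.of_forall fun x => (hMsq x).tendsto_sum_nat
    simp_rw [hFN] at hlim
    exact (hasSum_iff_tendsto_nat_of_nonneg hlam_nonneg _).2 hlim
  -- projection onto V via the orthonormal basis
  have hPnorm : ∀ v : H, ‖P v‖ ^ 2 = ∑ j, ⟪v, e j⟫ ^ 2 := by
    intro v
    have h1 : ∀ j, ⟪(V.orthogonalProjectionOnto v : V), b j⟫ = ⟪v, e j⟫ :=
      fun j => V.inner_orthogonalProjectionOnto_eq_of_mem_right (b j) v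
    have h2 := b.sum_inner_mul_inner (V.orthogonalProjectionOnto v) (V.orthogonalProjectionOnto v)
    have h3 : ‖P v‖ ^ 2 = ⟪(V.orthogonalProjectionOnto v : V), (V.orthogonalProjectionOnto v : V)⟫ := by
      rw [real_inner_self_eq_norm_sq]
      rfl
    rw [h3, ← h2]
    refine Finset.sum_congr rfl fun j _ => ?_
    have h4 : ⟪b j, V.orthogonalProjectionOnto v⟫ = ⟪v, e j⟫ := by
      rw [real_inner_comm]; exact h1 j
    rw [h1 j, h4, sq]
  have hPyth : ∀ v : H, ‖P v‖ ^ 2 + ‖v - P v‖ ^ 2 = ‖v‖ ^ 2 := by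
    intro v
    have h0 : ⟪P v, v - P v⟫ = 0 := by
      rw [real_inner_comm]
      exact V.starProjection_inner_eq_zero v (P v) (Submodule.coe_mem _)
    have h1 := norm_add_sq_real (P v) (v - P v)
    rw [h0, add_sub_cancel] at h1
    linarith
  -- the coefficients t i
  set t : ℕ → ℝ := fun i => ∑ j, ⟪φ i, e j⟫ ^ 2 with htdef
  clear_value t
  have ht0 : ∀ i, 0 ≤ t i := by
    intro i; simp only [htdef]; exact Finset.sum_nonneg fun j _ => sq_nonneg _
  have ht1 : ∀ i, t i ≤ 1 := by
    intro i
    have h1 : t i = ‖P (φ i)‖ ^ 2 := by simp only [htdef]; exact (hPnorm (φ i)).symm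
    have h3 : ‖φ i‖ ^ 2 ≤ 1 := by rw [hφnorm_sq]; split <;> norm_num
    nlinarith [hPyth (φ i), sq_nonneg ‖φ i - P (φ i)‖]
  have hON : Orthonormal ℝ (fun i : {i : ℕ // 0 < lam i} => φ i.1) := by
    rw [orthonormal_iff_ite]
    intro i j
    rw [hφφ]
    by_cases h : i = j
    · subst h; simp [i.2]
    · rw [if_neg (by simp [Subtype.ext_iff] at h; tauto), if_neg h]
  have htsum_le : ∀ s : Finset ℕ, ∑ i ∈ s, t i ≤ (m : ℝ) := by
    intro s
    simp only [htdef]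
    rw [Finset.sum_comm]
    calc ∑ j : Fin m, ∑ i ∈ s, ⟪φ i, e j⟫ ^ 2 ≤ ∑ _j : Fin m, (1 : ℝ) := by
          refine Finset.sum_le_sum fun j _ => ?_
          have hsplit : ∑ i ∈ s, ⟪φ i, e j⟫ ^ 2
              = ∑ i ∈ s.filter (fun i => 0 < lam i), ⟪φ i, e j⟫ ^ 2 := by
            rw [Finset.sum_filter]
            refine Finset.sum_congr rfl fun i _ => ?_
            by_cases hi : 0 < lam i
            · rw [if_pos hi]
            · rw [if_neg hi, hφzero i (le_antisymm (not_lt.mp hi) (hlam_nonneg i)),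
                inner_zero_left]
              norm_num
          rw [hsplit, ← Finset.sum_subtype_eq_sum_filter]
          have hBessel := hON.sum_inner_products_le (𝕜 := ℝ)
            (s := s.subtype (fun i => 0 < lam i)) (e j)
          simp only [Real.norm_eq_abs, sq_abs] at hBessel
          calc ∑ i ∈ s.subtype (fun i => 0 < lam i), ⟪φ i.1, e j⟫ ^ 2 ≤ ‖e j‖ ^ 2 := hBessel
            _ = 1 := by rw [he_norm j, one_pow]
      _ = (m : ℝ) := by simp
  have hts : Summable t := summable_of_sum_le ht0 htsum_le
  have htn : ∑' i, t i ≤ (n : ℝ) :=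
    le_trans (hts.tsum_le_of_sum_le htsum_le) (by exact_mod_cast hmn)
  -- integral of the squared projection norm
  have hPcont : Continuous P := continuous_subtype_val.comp V.orthogonalProjectionOnto.continuous
  have hproj_int : ∫ x, ‖P (Φ x)‖ ^ 2 ∂ρ = ∑' i, lam i * t i := by
    calc ∫ x, ‖P (Φ x)‖ ^ 2 ∂ρ = ∫ x, ∑ j, ⟪Φ x, e j⟫ ^ 2 ∂ρ := by
          simp_rw [hPnorm]
      _ = ∑ j, ∫ x, ⟪Φ x, e j⟫ ^ 2 ∂ρ :=
          integral_finset_sum _ fun j _ => hintR (f := fun x => ⟪Φ x, e j⟫ ^ 2) ((hΦc.inner continuous_const).pow 2)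
      _ = ∑ j, ∑' i, lam i * ⟪φ i, e j⟫ ^ 2 :=
          Finset.sum_congr rfl fun j _ => ((keyA (e j) (le_of_eq (he_norm j))).tsum_eq).symm
      _ = ∑' i, ∑ j, lam i * ⟪φ i, e j⟫ ^ 2 :=
          (Summable.tsum_finsetSum (fun j _ => (keyA (e j) (le_of_eq (he_norm j))).summable)).symm
      _ = ∑' i, lam i * t i := tsum_congr fun i => by simp only [htdef]; rw [Finset.mul_sum]
  -- distance = norm of the projection residual
  have hdist2 : ∀ x, Metric.infDist (Φ x) (V : Set H) ^ 2 = ‖Φ x‖ ^ 2 - ‖P (Φ x)‖ ^ 2 := by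
    intro x
    have h1 : Metric.infDist (Φ x) (V : Set H) = ‖Φ x - P (Φ x)‖ := by
      rw [Metric.infDist_eq_iInf, show ‖Φ x - P (Φ x)‖ = _ from Submodule.starProjection_minimal (Φ x)]
      exact iInf_congr fun y => dist_eq_norm _ _
    rw [h1]
    have := hPyth (Φ x)
    linarith
  have hint1 : Integrable (fun x => ‖Φ x‖ ^ 2) ρ := hintR (hΦc.norm.pow 2)
  have hint2 : Integrable (fun x => ‖P (Φ x)‖ ^ 2) ρ := hintR (((hPcont.comp hΦc).norm).pow 2)
  have hile : ∫ x, ‖P (Φ x)‖ ^ 2 ∂ρ ≤ ∑ i ∈ range n, lam i := by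
    rw [hproj_int]
    exact aux_tail_bound lam t n hlam_anti hlam_nonneg hL.summable ht0 ht1 hts htn
  have hIeq : ∫ x, Metric.infDist (Φ x) (V : Set H) ^ 2 ∂ρ
      = (∫ x, ‖Φ x‖ ^ 2 ∂ρ) - ∫ x, ‖P (Φ x)‖ ^ 2 ∂ρ := by
    rw [show (fun x => Metric.infDist (Φ x) (V : Set H) ^ 2)
        = fun x => ‖Φ x‖ ^ 2 - ‖P (Φ x)‖ ^ 2 from funext hdist2]
    exact integral_sub hint1 hint2
  have hsplit := Summable.sum_add_tsum_nat_add (f := lam) n hL.summable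
  have htot : ∫ x, ‖Φ x‖ ^ 2 ∂ρ = ∑' i, lam i := hL.tsum_eq.symm
  have hgoal : ∑' i, lam (n + i) = ∑' i, lam (i + n) := tsum_congr fun i => by rw [add_comm]
  rw [show (Submodule.span ℝ (Set.range fun i => Φ (pts i)) : Set H) = (V : Set H) from rfl]
  rw [hIeq]
  linarith
end

section
/- For any orthonormal vectors e_1,…,e_n ∈ H, Σ_{i=1}^n ∫_X ⟨e_i, Φ(x)⟩² dρ(x) ≤ Σ_{l=1}^n λ_l. That is, the total L²(ρ)-mass of the functions x ↦ ⟨e_i, Φ(x)⟩ associated with any n orthonormal elements of H is at most the sum of the n largest eigenvalues of the kernel integral operator. -/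
open MeasureTheory Filter
open scoped RealInnerProductSpace Topology


lemma cont_integrable {X : Type*} [MetricSpace X] [CompactSpace X] [MeasurableSpace X]
    [BorelSpace X] (ρ : Measure X) [IsFiniteMeasure ρ] {E : Type*} [NormedAddCommGroup E]
    {f : X → E} (hf : Continuous f) : Integrable f ρ := by
  rw [← integrableOn_univ]
  exact hf.continuousOn.integrableOn_compact isCompact_univ

/-- Combinatorial lemma: if `0 ≤ b l ≤ 1` and `∑_{l<N} b l ≤ n`, then
`∑_{l<N} lam l * b l ≤ ∑_{l<n} lam l` for antitone nonnegative `lam`. -/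
lemma sum_lam_mul_le (lam : ℕ → ℝ) (hanti : Antitone lam) (hpos : ∀ i, 0 ≤ lam i)
    (b : ℕ → ℝ) (hb0 : ∀ l, 0 ≤ b l) (hb1 : ∀ l, b l ≤ 1) (n N : ℕ)
    (hbn : ∑ l ∈ Finset.range N, b l ≤ (n : ℝ)) :
    ∑ l ∈ Finset.range N, lam l * b l ≤ ∑ l ∈ Finset.range n, lam l := by
  rcases le_total N n with h | h
  · calc ∑ l ∈ Finset.range N, lam l * b l ≤ ∑ l ∈ Finset.range N, lam l := by
          apply Finset.sum_le_sum; intro l _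
          calc lam l * b l ≤ lam l * 1 := by
                exact mul_le_mul_of_nonneg_left (hb1 l) (hpos l)
            _ = lam l := mul_one _
      _ ≤ ∑ l ∈ Finset.range n, lam l := by
          apply Finset.sum_le_sum_of_subset_of_nonneg
          · exact Finset.range_subset_range.2 h
          · intro i _ _; exact hpos i
  · have hsplit : Finset.range N = Finset.range n ∪ Finset.Ico n N := by
      rw [Finset.range_eq_Ico, Finset.range_eq_Ico]
      exact (Finset.Ico_union_Ico_eq_Ico (Nat.zero_le n) h).symm
    have hdisj : Disjoint (Finset.range n) (Finset.Ico n N) := by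
      rw [Finset.range_eq_Ico]
      exact Finset.Ico_disjoint_Ico_consecutive 0 n N
    have htail : ∑ l ∈ Finset.Ico n N, lam l * b l ≤ lam n * ((n : ℝ) - ∑ l ∈ Finset.range n, b l) := by
      have h1 : ∑ l ∈ Finset.Ico n N, lam l * b l ≤ ∑ l ∈ Finset.Ico n N, lam n * b l := by
        apply Finset.sum_le_sum; intro l hl
        exact mul_le_mul_of_nonneg_right (hanti (Finset.mem_Ico.1 hl).1) (hb0 l)
      have h2 : ∑ l ∈ Finset.Ico n N, b l ≤ (n : ℝ) - ∑ l ∈ Finset.range n, b l := by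
        have := hbn
        rw [hsplit, Finset.sum_union hdisj] at this
        linarith
      calc ∑ l ∈ Finset.Ico n N, lam l * b l ≤ ∑ l ∈ Finset.Ico n N, lam n * b l := h1
        _ = lam n * ∑ l ∈ Finset.Ico n N, b l := by rw [Finset.mul_sum]
        _ ≤ lam n * ((n : ℝ) - ∑ l ∈ Finset.range n, b l) :=
            mul_le_mul_of_nonneg_left h2 (hpos n)
    have hfinal : ∑ l ∈ Finset.range n, lam l * b l
        + lam n * ((n : ℝ) - ∑ l ∈ Finset.range n, b l) ≤ ∑ l ∈ Finset.range n, lam l := by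
      have : (n : ℝ) = ∑ _l ∈ Finset.range n, (1 : ℝ) := by simp
      rw [this, ← Finset.sum_sub_distrib, Finset.mul_sum, ← Finset.sum_add_distrib]
      apply Finset.sum_le_sum; intro l hl
      have hln : lam n ≤ lam l := hanti (Finset.mem_range.1 hl).le
      nlinarith [hb0 l, hb1 l, hpos n, hpos l]
    rw [hsplit, Finset.sum_union hdisj]
    linarith


/-- Expansion of the squared distance to a partial sum over an "orthonormal-or-zero" family. -/
lemma norm_sub_partial_sum {H : Type*} [NormedAddCommGroup H] [InnerProductSpace ℝ H]
    {ι : Type*} (v : ι → H) (hvv : ∀ l m, l ≠ m → ⟪v l, v m⟫ = 0)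
    (x : H) (c : ι → ℝ) (S : Finset ι) (hc : ∀ l ∈ S, ⟪v l, x⟫ = c l)
    (hvn : ∀ l, ⟪v l, v l⟫ = 1 ∨ v l = 0) :
    ⟪x - ∑ l ∈ S, c l • v l, x - ∑ l ∈ S, c l • v l⟫ = ⟪x, x⟫ - ∑ l ∈ S, (c l) ^ 2 := by
  set s := ∑ l ∈ S, c l • v l with hs
  have hcz : ∀ l ∈ S, v l = 0 → c l = 0 := by
    intro l hl h0
    rw [← hc l hl, h0, inner_zero_left]
  have hxs : ⟪x, s⟫ = ∑ l ∈ S, (c l) ^ 2 := by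
    rw [hs, inner_sum]
    apply Finset.sum_congr rfl
    intro l hl
    rw [real_inner_smul_right, real_inner_comm, hc l hl, sq]
  have hss : ⟪s, s⟫ = ∑ l ∈ S, (c l) ^ 2 := by
    rw [hs, sum_inner]
    apply Finset.sum_congr rfl
    intro l hl
    rw [real_inner_smul_left]
    have hvls : ⟪v l, s⟫ = c l * ⟪v l, v l⟫ := by
      rw [hs, inner_sum]
      rw [Finset.sum_eq_single_of_mem l hl]
      · rw [real_inner_smul_right]
      · intro m hm hml
        rw [real_inner_smul_right, hvv l m (Ne.symm hml), mul_zero]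
    rw [hvls]
    rcases hvn l with h1 | h0
    · rw [h1, mul_one, sq]
    · rw [hcz l hl h0]; ring
  have expand : ⟪x - s, x - s⟫ = ⟪x, x⟫ - ⟪x, s⟫ - ⟪s, x⟫ + ⟪s, s⟫ := by
    rw [inner_sub_left, inner_sub_right, inner_sub_right]; ring
  have hsx : ⟪s, x⟫ = ∑ l ∈ S, (c l) ^ 2 := by rw [real_inner_comm]; exact hxs
  rw [expand, hxs, hsx, hss]; ring

lemma bessel_aux {H : Type*} [NormedAddCommGroup H] [InnerProductSpace ℝ H]
    {ι : Type*} (v : ι → H) (hvv : ∀ l m, l ≠ m → ⟪v l, v m⟫ = 0)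
    (hvn : ∀ l, ⟪v l, v l⟫ = 1 ∨ v l = 0)
    (x : H) (S : Finset ι) :
    ∑ l ∈ S, ⟪v l, x⟫ ^ 2 ≤ ‖x‖ ^ 2 := by
  have h := norm_sub_partial_sum v hvv x (fun l => ⟪v l, x⟫) S (fun l _ => rfl) hvn
  have h0 : (0:ℝ) ≤ ⟪x - ∑ l ∈ S, ⟪v l, x⟫ • v l, x - ∑ l ∈ S, ⟪v l, x⟫ • v l⟫ :=
    real_inner_self_nonneg
  rw [h, real_inner_self_eq_norm_sq] at h0
  linarith


/-- The total `L²(ρ)`-mass of the functions `x ↦ ⟪e_i, Φ x⟫` associated with any `n`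
orthonormal elements of `H` is at most the sum of the `n` largest eigenvalues of the
kernel integral operator. -/
theorem orthonormal_mass_le_eigenvalue_sum
    {X : Type*} [MetricSpace X] [CompactSpace X] [MeasurableSpace X] [BorelSpace X]
    (ρ : Measure X) [IsProbabilityMeasure ρ]
    {H : Type*} [NormedAddCommGroup H] [InnerProductSpace ℝ H] [CompleteSpace H]
    (Φ : X → H) (hΦc : Continuous Φ) (hΦ : ∀ x, ‖Φ x‖ ≤ 1)
    (lam : ℕ → ℝ) (hlam_anti : Antitone lam) (hlam_nonneg : ∀ i, 0 ≤ lam i)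
    (ψ : ℕ → X → ℝ) (hψc : ∀ i, Continuous (ψ i))
    (horth : ∀ i j, ∫ x, ψ i x * ψ j x ∂ρ = if i = j then 1 else 0)
    (heig : ∀ i x, ∫ y, ⟪Φ x, Φ y⟫ * ψ i y ∂ρ = lam i * ψ i x)
    (hmercer : ∀ x y, HasSum (fun i => lam i * ψ i x * ψ i y) ⟪Φ x, Φ y⟫)
    (n : ℕ) (e : Fin n → H) (he : Orthonormal ℝ e) :
    ∑ i, ∫ x, ⟪e i, Φ x⟫ ^ 2 ∂ρ ≤ ∑ l ∈ Finset.range n, lam l := by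
  classical
  -- the H-valued "eigen-features"
  set g : ℕ → H := fun l => ∫ x, ψ l x • Φ x ∂ρ with hgdef
  have hintsmul : ∀ l, Integrable (fun x => ψ l x • Φ x) ρ :=
    fun l => cont_integrable ρ ((hψc l).smul hΦc)
  have heg : ∀ (u : H) l, ⟪u, g l⟫ = ∫ x, ψ l x * ⟪u, Φ x⟫ ∂ρ := by
    intro u l
    rw [hgdef, ← integral_inner (hintsmul l) u]
    simp_rw [real_inner_smul_right]
  -- inner products with Φ x
  have hΦg : ∀ l x, ⟪Φ x, g l⟫ = lam l * ψ l x := by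
    intro l x
    rw [heg (Φ x) l, ← heig l x]
    congr 1; funext y; ring
  -- Gram matrix of the g's
  have hgg : ∀ l m, ⟪g l, g m⟫ = if l = m then lam l else 0 := by
    intro l m
    have h1 : ⟪g m, g l⟫ = ∫ x, ψ l x * (lam m * ψ m x) ∂ρ := by
      rw [heg (g m) l]
      congr 1; funext x
      rw [real_inner_comm, hΦg m x]
    have h2 : ∫ x, ψ l x * (lam m * ψ m x) ∂ρ = lam m * ∫ x, ψ l x * ψ m x ∂ρ := by
      rw [← integral_const_mul]
      congr 1; funext x; ring
    rw [real_inner_comm, h1, h2, horth l m]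
    by_cases h : l = m
    · subst h; simp
    · simp [h, Ne.symm h]
  have hgl0 : ∀ l, lam l = 0 → g l = 0 := by
    intro l h0
    have h := hgg l l
    rw [if_pos rfl, h0] at h
    exact inner_self_eq_zero.mp h
  -- the normalized eigenvectors
  set v : ℕ → H := fun l => (Real.sqrt (lam l))⁻¹ • g l with hvdef
  have hvv : ∀ l m, l ≠ m → ⟪v l, v m⟫ = 0 := by
    intro l m hlm
    rw [hvdef]
    simp only [real_inner_smul_left, real_inner_smul_right, hgg l m, if_neg hlm]
    ring
  have hvn : ∀ l, ⟪v l, v l⟫ = 1 ∨ v l = 0 := by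
    intro l
    by_cases h0 : lam l = 0
    · right; rw [hvdef]; simp [hgl0 l h0]
    · left
      have hpos : 0 < lam l := lt_of_le_of_ne (hlam_nonneg l) (Ne.symm h0)
      have hs : Real.sqrt (lam l) ≠ 0 := by positivity
      rw [hvdef]
      simp only [real_inner_smul_left, real_inner_smul_right, hgg l l, if_pos rfl]
      rw [← Real.mul_self_sqrt (hlam_nonneg l)]
      field_simp
      simp [Real.sqrt_sq (Real.sqrt_nonneg _)]
  have hvΦ : ∀ l x, ⟪v l, Φ x⟫ = Real.sqrt (lam l) * ψ l x := by
    intro l x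
    by_cases h0 : lam l = 0
    · rw [hvdef]
      simp [hgl0 l h0, h0]
    · have hpos : 0 < lam l := lt_of_le_of_ne (hlam_nonneg l) (Ne.symm h0)
      have hs : Real.sqrt (lam l) ≠ 0 := by positivity
      rw [hvdef]
      simp only [real_inner_smul_left]
      rw [real_inner_comm, hΦg l x, inv_mul_eq_iff_eq_mul₀ hs, ← mul_assoc,
        Real.mul_self_sqrt (hlam_nonneg l)]
  have hvei : ∀ (i : Fin n) l, Real.sqrt (lam l) * ⟪e i, v l⟫ = ⟪e i, g l⟫ := by
    intro i l
    by_cases h0 : lam l = 0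
    · rw [hvdef]
      simp [hgl0 l h0, h0]
    · have hpos : 0 < lam l := lt_of_le_of_ne (hlam_nonneg l) (Ne.symm h0)
      have hs : Real.sqrt (lam l) ≠ 0 := by positivity
      rw [hvdef]
      simp only [real_inner_smul_right]
      field_simp
  have hlv : ∀ (i : Fin n) l, lam l * ⟪e i, v l⟫ ^ 2 = ⟪e i, g l⟫ ^ 2 := by
    intro i l
    rw [← hvei i l, mul_pow, Real.sq_sqrt (hlam_nonneg l)]
  -- continuity of the coefficient functions
  have hfc : ∀ u : H, Continuous (fun x => ⟪u, Φ x⟫) := fun u => continuous_const.inner hΦc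
  -- the key limit, for each i
  have key : ∀ i : Fin n, Tendsto (fun N => ∑ l ∈ Finset.range N, lam l * ⟪e i, v l⟫ ^ 2)
      atTop (𝓝 (∫ x, ⟪e i, Φ x⟫ ^ 2 ∂ρ)) := by
    intro i
    have hei1 : ‖e i‖ = 1 := he.1 i
    set F : ℕ → X → ℝ :=
      fun N x => ⟪e i, Φ x⟫ * ∑ l ∈ Finset.range N, (Real.sqrt (lam l) * ψ l x) * ⟪e i, v l⟫
      with hFdef
    -- pointwise convergence
    have hptwise : ∀ x, Tendsto (fun N => F N x) atTop (𝓝 (⟪e i, Φ x⟫ ^ 2)) := by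
      intro x
      have hcsum : HasSum (fun l => (Real.sqrt (lam l) * ψ l x) ^ 2) (‖Φ x‖ ^ 2) := by
        have := hmercer x x
        rw [real_inner_self_eq_norm_sq] at this
        convert this using 2 with l
        rw [mul_pow, Real.sq_sqrt (hlam_nonneg l), sq, mul_assoc]
      have hparttend : Tendsto (fun N => ∑ l ∈ Finset.range N, (Real.sqrt (lam l) * ψ l x) ^ 2)
          atTop (𝓝 (‖Φ x‖ ^ 2)) := hcsum.tendsto_sum_nat
      have hdiff : ∀ N : ℕ,
          ‖Φ x - ∑ l ∈ Finset.range N, (Real.sqrt (lam l) * ψ l x) • v l‖ ^ 2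
            = ‖Φ x‖ ^ 2 - ∑ l ∈ Finset.range N, (Real.sqrt (lam l) * ψ l x) ^ 2 := by
        intro N
        rw [← real_inner_self_eq_norm_sq, ← real_inner_self_eq_norm_sq]
        exact norm_sub_partial_sum v hvv (Φ x) (fun l => Real.sqrt (lam l) * ψ l x)
          (Finset.range N) (fun l _ => hvΦ l x) hvn
      have hnormsq0 : Tendsto
          (fun N => ‖Φ x - ∑ l ∈ Finset.range N, (Real.sqrt (lam l) * ψ l x) • v l‖ ^ 2)
          atTop (𝓝 0) := by
        simp_rw [hdiff]
        have := hparttend.const_sub (‖Φ x‖ ^ 2)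
        simpa using this
      have hnorm0 : Tendsto
          (fun N => ‖Φ x - ∑ l ∈ Finset.range N, (Real.sqrt (lam l) * ψ l x) • v l‖)
          atTop (𝓝 0) := by
        have hcomp := hnormsq0.sqrt
        simpa [Real.sqrt_sq, norm_nonneg] using hcomp
      have hsN : Tendsto (fun N => ∑ l ∈ Finset.range N, (Real.sqrt (lam l) * ψ l x) • v l)
          atTop (𝓝 (Φ x)) := by
        rw [tendsto_iff_dist_tendsto_zero]
        simpa [dist_eq_norm, norm_sub_rev] using hnorm0
      have hinner : Tendsto
          (fun N => ⟪e i, ∑ l ∈ Finset.range N, (Real.sqrt (lam l) * ψ l x) • v l⟫)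
          atTop (𝓝 ⟪e i, Φ x⟫) := Filter.Tendsto.inner tendsto_const_nhds hsN
      have hform : ∀ N, ⟪e i, ∑ l ∈ Finset.range N, (Real.sqrt (lam l) * ψ l x) • v l⟫
          = ∑ l ∈ Finset.range N, (Real.sqrt (lam l) * ψ l x) * ⟪e i, v l⟫ := by
        intro N
        rw [inner_sum]
        apply Finset.sum_congr rfl
        intro l _
        rw [real_inner_smul_right]
      rw [hFdef]
      simp only
      have := hinner.const_mul ⟪e i, Φ x⟫
      simp_rw [hform] at this
      simpa [sq] using this
    -- uniform bound
    have hbound : ∀ N x, ‖F N x‖ ≤ 1 := by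
      intro N x
      rw [hFdef]
      simp only [Real.norm_eq_abs, abs_mul]
      have h1 : |⟪e i, Φ x⟫| ≤ 1 := by
        calc |⟪e i, Φ x⟫| ≤ ‖e i‖ * ‖Φ x‖ := abs_real_inner_le_norm _ _
          _ ≤ 1 := by rw [hei1, one_mul]; exact hΦ x
      have h2 : |∑ l ∈ Finset.range N, (Real.sqrt (lam l) * ψ l x) * ⟪e i, v l⟫| ≤ 1 := by
        rw [← sq_le_one_iff_abs_le_one]
        calc (∑ l ∈ Finset.range N, (Real.sqrt (lam l) * ψ l x) * ⟪e i, v l⟫) ^ 2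
            ≤ (∑ l ∈ Finset.range N, (Real.sqrt (lam l) * ψ l x) ^ 2)
              * ∑ l ∈ Finset.range N, ⟪e i, v l⟫ ^ 2 :=
            Finset.sum_mul_sq_le_sq_mul_sq _ _ _
          _ ≤ 1 * 1 := by
            apply mul_le_mul
            · have hle : ∑ l ∈ Finset.range N, (Real.sqrt (lam l) * ψ l x) ^ 2 ≤ ‖Φ x‖ ^ 2 := by
                apply sum_le_hasSum (L := SummationFilter.unconditional ℕ) _ (fun l _ => sq_nonneg _)
                · have := hmercer x x
                  rw [real_inner_self_eq_norm_sq] at this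
                  convert this using 2 with l
                  · rfl
                  rw [mul_pow, Real.sq_sqrt (hlam_nonneg l), sq, mul_assoc]
              calc _ ≤ ‖Φ x‖ ^ 2 := hle
                _ ≤ 1 := by nlinarith [hΦ x, norm_nonneg (Φ x)]
            · have := bessel_aux v hvv hvn (e i) (Finset.range N)
              simp_rw [real_inner_comm] at this
              calc ∑ l ∈ Finset.range N, ⟪e i, v l⟫ ^ 2 ≤ ‖e i‖ ^ 2 := this
                _ = 1 := by rw [hei1]; norm_num
            · positivity
            · norm_num
          _ = 1 := by norm_num
      calc |⟪e i, Φ x⟫| * |∑ l ∈ Finset.range N, (Real.sqrt (lam l) * ψ l x) * ⟪e i, v l⟫|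
          ≤ 1 * 1 := mul_le_mul h1 h2 (abs_nonneg _) (by norm_num)
        _ = 1 := by norm_num
    -- measurability
    have hFc : ∀ N, Continuous (F N) := by
      intro N
      rw [hFdef]
      apply (hfc (e i)).mul
      apply continuous_finset_sum
      intro l _
      exact (continuous_const.mul (hψc l)).mul continuous_const
    -- dominated convergence
    have hdct : Tendsto (fun N => ∫ x, F N x ∂ρ) atTop (𝓝 (∫ x, ⟪e i, Φ x⟫ ^ 2 ∂ρ)) := by
      apply tendsto_integral_of_dominated_convergence (fun _ => (1 : ℝ))
      · exact fun N => (hFc N).aestronglyMeasurable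
      · exact integrable_const 1
      · intro N
        exact Filter.Eventually.of_forall (fun x => hbound N x)
      · exact Filter.Eventually.of_forall hptwise
    -- identify the integrals
    have hid : ∀ N, ∫ x, F N x ∂ρ = ∑ l ∈ Finset.range N, lam l * ⟪e i, v l⟫ ^ 2 := by
      intro N
      have hform : ∀ x, F N x = ∑ l ∈ Finset.range N,
          (Real.sqrt (lam l) * ⟪e i, v l⟫) * (ψ l x * ⟪e i, Φ x⟫) := by
        intro x
        rw [hFdef]
        simp only
        rw [Finset.mul_sum]
        apply Finset.sum_congr rfl
        intro l _
        ring
      simp_rw [hform]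
      rw [integral_finset_sum]
      · apply Finset.sum_congr rfl
        intro l _
        rw [integral_const_mul, ← heg (e i) l, hvei i l, hlv i l]
        rw [← hvei i l]
        ring
      · intro l _
        apply cont_integrable ρ
        exact continuous_const.mul ((hψc l).mul (hfc (e i)))
    simp_rw [← hid]
    exact hdct
  -- pass to the limit in the finite-N inequality
  have htends : Tendsto (fun N => ∑ i, ∑ l ∈ Finset.range N, lam l * ⟪e i, v l⟫ ^ 2)
      atTop (𝓝 (∑ i, ∫ x, ⟪e i, Φ x⟫ ^ 2 ∂ρ)) :=
    tendsto_finset_sum _ (fun i _ => key i)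
  apply le_of_tendsto htends
  apply Filter.Eventually.of_forall
  intro N
  -- swap sums and apply the combinatorial lemma
  have hswap : ∑ i, ∑ l ∈ Finset.range N, lam l * ⟪e i, v l⟫ ^ 2
      = ∑ l ∈ Finset.range N, lam l * ∑ i, ⟪e i, v l⟫ ^ 2 := by
    rw [Finset.sum_comm]
    apply Finset.sum_congr rfl
    intro l _
    rw [Finset.mul_sum]
  rw [hswap]
  apply sum_lam_mul_le lam hlam_anti hlam_nonneg (fun l => ∑ i, ⟪e i, v l⟫ ^ 2)
  · intro l
    positivity
  · intro l
    -- Bessel w.r.t. the orthonormal family e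
    have hee : ∀ p q : Fin n, p ≠ q → ⟪e p, e q⟫ = 0 := fun p q hpq => he.2 hpq
    have hen : ∀ p : Fin n, ⟪e p, e p⟫ = 1 ∨ e p = 0 := by
      intro p
      left
      rw [real_inner_self_eq_norm_sq, he.1 p]
      norm_num
    have := bessel_aux e hee hen (v l) Finset.univ
    have hvl1 : ‖v l‖ ^ 2 ≤ 1 := by
      rcases hvn l with h1 | h0
      · rw [← real_inner_self_eq_norm_sq, h1]
      · rw [h0]; simp
    calc ∑ i, ⟪e i, v l⟫ ^ 2 = ∑ i, ⟪e i, v l⟫ ^ 2 := rfl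
      _ ≤ ‖v l‖ ^ 2 := this
      _ ≤ 1 := hvl1
  · -- ∑_{l<N} b l ≤ n
    rw [Finset.sum_comm]
    calc ∑ i : Fin n, ∑ l ∈ Finset.range N, ⟪e i, v l⟫ ^ 2
        ≤ ∑ _i : Fin n, (1 : ℝ) := by
          apply Finset.sum_le_sum
          intro i _
          have := bessel_aux v hvv hvn (e i) (Finset.range N)
          simp_rw [real_inner_comm] at this
          calc ∑ l ∈ Finset.range N, ⟪e i, v l⟫ ^ 2 ≤ ‖e i‖ ^ 2 := this
            _ = 1 := by rw [he.1 i]; norm_num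
      _ = (n : ℝ) := by simp
end
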